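/- arXiv:1501.07402 — 10 statements merged into one kernel-verified Lean document; each statement's English description precedes it below -/
import Mathlib

section
/- Let M be a nonnegative left substochastic n×n matrix with ρ(M) < 1 and L the diagonal 0-1 matrix of an index subset N₀ ⊆ {1,...,n}. Then entrywise (I − LML)^{-1} L ≤ L (I − M)^{-1} L. -/
open Matrix Finset Filter Topology

section auxiliary

attribute [local instance] Matrix.linftyOpNormedRing Matrix.linftyOpNormedAlgebra

private lemma entry_norm_le_linfty' {n : ℕ} (A : Matrix (Fin n) (Fin n) ℂ) (i j : Fin n) :
    ‖A i j‖₊ ≤ ‖A‖₊ := by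
  rw [Matrix.linfty_opNNNorm_def]
  exact le_trans (Finset.single_le_sum (f := fun k => ‖A i k‖₊) (fun k _ => zero_le)
    (Finset.mem_univ j)) (Finset.le_sup (f := fun i => ∑ j, ‖A i j‖₊) (Finset.mem_univ i))

private lemma pow_entry_tendsto_zero' {n : ℕ} (M : Matrix (Fin n) (Fin n) ℝ)
    (hspec : ∀ μ ∈ spectrum ℂ (M.map (Complex.ofReal)), ‖μ‖ < 1) :
    ∀ i j, Tendsto (fun k => (M ^ k) i j) atTop (𝓝 0) := by
  intro i j
  haveI : Nonempty (Fin n) := ⟨i⟩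
  set A := M.map (Complex.ofReal) with hA
  have hrad : spectralRadius ℂ A < 1 := by
    have := spectrum.spectralRadius_lt_of_forall_lt (a := A) (r := 1)
      (fun z hz => by
        have := hspec z hz
        rw [← NNReal.coe_lt_coe]
        simpa using this)
    simpa using this
  obtain ⟨r, hr1, hr2⟩ := exists_between hrad
  have hgel := spectrum.pow_nnnorm_pow_one_div_tendsto_nhds_spectralRadius A
  have hev : ∀ᶠ k : ℕ in atTop, ((‖A ^ k‖₊ : ENNReal)) ^ (1 / (k:ℝ)) < r :=
    hgel.eventually_lt_const hr1
  have hrtop : r ≠ ⊤ := (hr2.trans_le le_top).ne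
  lift r to NNReal using hrtop with r'
  have hr'1 : r' < 1 := by exact_mod_cast hr2
  have hbound : ∀ᶠ k in atTop, ‖A ^ k‖ ≤ (r' : ℝ) ^ k := by
    filter_upwards [hev, eventually_ge_atTop 1] with k hk hk1
    have hk0 : (k : ℝ) ≠ 0 := by positivity
    have h1 := ENNReal.rpow_le_rpow hk.le (by positivity : (0:ℝ) ≤ (k:ℝ))
    rw [← ENNReal.rpow_mul, one_div, inv_mul_cancel₀ hk0, ENNReal.rpow_one,
      ENNReal.rpow_natCast, ← ENNReal.coe_pow, ENNReal.coe_le_coe] at h1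
    calc ‖A ^ k‖ = ((‖A ^ k‖₊ : NNReal) : ℝ) := rfl
      _ ≤ ((r' ^ k : NNReal) : ℝ) := by exact_mod_cast h1
      _ = (r' : ℝ) ^ k := by push_cast; ring
  have hnorm0 : Tendsto (fun k => ‖A ^ k‖) atTop (𝓝 0) := by
    have hg : Tendsto (fun k => (r' : ℝ) ^ k) atTop (𝓝 0) :=
      tendsto_pow_atTop_nhds_zero_of_lt_one (by positivity) (by exact_mod_cast hr'1)
    refine squeeze_zero_norm' ?_ hg
    filter_upwards [hbound] with k hk using by simpa using hk
  have hmap : ∀ k : ℕ, A ^ k = (M ^ k).map (Complex.ofReal) := by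
    intro k
    have := map_pow (Complex.ofRealHom.mapMatrix (m := Fin n)) M k
    rw [hA]; exact this.symm
  have hentry : Tendsto (fun k => ‖(A ^ k) i j‖) atTop (𝓝 0) := by
    refine squeeze_zero_norm' ?_ hnorm0
    filter_upwards with k
    simpa using NNReal.coe_le_coe.mpr (entry_norm_le_linfty' (A ^ k) i j)
  have : ∀ k, ‖(A ^ k) i j‖ = |(M ^ k) i j| := by
    intro k; rw [hmap k]; simp [Matrix.map_apply]
  simp_rw [this] at hentry
  exact tendsto_zero_iff_abs_tendsto_zero _ |>.mpr hentry

end auxiliary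

section realPart

variable {n : ℕ}

private lemma mul_entry_le' {A A' C C' : Matrix (Fin n) (Fin n) ℝ}
    (hA0 : ∀ i j, 0 ≤ A i j) (hC0 : ∀ i j, 0 ≤ C i j)
    (hA : ∀ i j, A i j ≤ A' i j) (hC : ∀ i j, C i j ≤ C' i j) :
    ∀ i j, (A * C) i j ≤ (A' * C') i j := by
  intro i j
  simp only [Matrix.mul_apply]
  refine Finset.sum_le_sum fun k _ => ?_
  exact mul_le_mul (hA i k) (hC k j) (hC0 k j) (le_trans (hA0 i k) (hA i k))

private lemma mul_nonneg_entry' {A C : Matrix (Fin n) (Fin n) ℝ}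
    (hA0 : ∀ i j, 0 ≤ A i j) (hC0 : ∀ i j, 0 ≤ C i j) :
    ∀ i j, 0 ≤ (A * C) i j := by
  intro i j
  simp only [Matrix.mul_apply]
  exact Finset.sum_nonneg fun k _ => mul_nonneg (hA0 i k) (hC0 k j)

private lemma pow_entry_le' {A C : Matrix (Fin n) (Fin n) ℝ}
    (hA0 : ∀ i j, 0 ≤ A i j) (hC0 : ∀ i j, 0 ≤ C i j)
    (h : ∀ i j, A i j ≤ C i j) (m : ℕ) :
    (∀ i j, 0 ≤ (A ^ m) i j) ∧ ∀ i j, (A ^ m) i j ≤ (C ^ m) i j := by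
  induction m with
  | zero =>
    constructor <;> intro i j <;> simp only [pow_zero, Matrix.one_apply] <;>
      split <;> norm_num
  | succ m ih =>
    rw [pow_succ, pow_succ]
    exact ⟨mul_nonneg_entry' ih.1 hA0, mul_entry_le' ih.1 hA0 ih.2 h⟩

private lemma tendsto_mat_mul' {F G : ℕ → Matrix (Fin n) (Fin n) ℝ}
    {A B : Matrix (Fin n) (Fin n) ℝ}
    (hF : Tendsto F atTop (𝓝 A)) (hG : Tendsto G atTop (𝓝 B)) :
    Tendsto (fun k => F k * G k) atTop (𝓝 (A * B)) := by
  have hFe : ∀ i j, Tendsto (fun k => F k i j) atTop (𝓝 (A i j)) := fun i j =>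
    tendsto_pi_nhds.mp (tendsto_pi_nhds.mp hF i) j
  have hGe : ∀ i j, Tendsto (fun k => G k i j) atTop (𝓝 (B i j)) := fun i j =>
    tendsto_pi_nhds.mp (tendsto_pi_nhds.mp hG i) j
  refine tendsto_pi_nhds.mpr fun i => tendsto_pi_nhds.mpr fun j => ?_
  simp only [Matrix.mul_apply]
  exact tendsto_finset_sum _ fun m _ => (hFe i m).mul (hGe m j)

/-- invertibility and Neumann limit from `X ^ k → 0` entrywise. -/
private lemma neumann' {X : Matrix (Fin n) (Fin n) ℝ}
    (hX : ∀ i j, Tendsto (fun k => (X ^ k) i j) atTop (𝓝 0)) :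
    IsUnit (1 - X).det ∧
      Tendsto (fun k => ∑ m ∈ range k, X ^ m) atTop (𝓝 (1 - X)⁻¹) := by
  have hXm : Tendsto (fun k => X ^ k) atTop (𝓝 0) := by
    exact tendsto_pi_nhds.mpr fun i => tendsto_pi_nhds.mpr fun j => hX i j
  have h1 : Tendsto (fun k => (1 : Matrix (Fin n) (Fin n) ℝ) - X ^ k) atTop (𝓝 1) := by
    have := tendsto_const_nhds (x := (1 : Matrix (Fin n) (Fin n) ℝ)) (f := atTop (α := ℕ)) |>.sub hXm
    simpa using this
  have hgeom : ∀ k, (∑ m ∈ range k, X ^ m) * (1 - X) = 1 - X ^ k := fun k =>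
    geom_sum_mul_neg X k
  have hdet : IsUnit (1 - X).det := by
    rw [isUnit_iff_ne_zero]
    intro h0
    have hd : Tendsto (fun k => ((1 : Matrix (Fin n) (Fin n) ℝ) - X ^ k).det) atTop
        (𝓝 (det (1 : Matrix (Fin n) (Fin n) ℝ))) :=
      (Continuous.matrix_det continuous_id).continuousAt.tendsto.comp h1
    have hzero : ∀ k, ((1 : Matrix (Fin n) (Fin n) ℝ) - X ^ k).det = 0 := by
      intro k
      rw [← hgeom k, Matrix.det_mul, h0, mul_zero]
    simp only [hzero, Matrix.det_one] at hd
    exact zero_ne_one (tendsto_nhds_unique tendsto_const_nhds hd)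
  refine ⟨hdet, ?_⟩
  have hS : ∀ k, (∑ m ∈ range k, X ^ m) = (1 - X ^ k) * (1 - X)⁻¹ := by
    intro k
    have := congrArg (fun Y => Y * (1 - X)⁻¹) (hgeom k)
    simpa [Matrix.mul_assoc, Matrix.mul_nonsing_inv _ hdet] using this
  simp_rw [hS]
  have := tendsto_mat_mul' h1 (tendsto_const_nhds (x := (1 - X)⁻¹) (f := atTop (α := ℕ)))
  simpa using this

end realPart

/-- For a nonnegative left substochastic matrix `M` with spectral
radius `< 1` and `L` the 0-1 diagonal matrix of an index set `N₀`, one has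
`(I - LML)⁻¹ L ≤ L (I - M)⁻¹ L` entrywise. -/
theorem inv_indicator_entrywise_le {n : ℕ}
    (M : Matrix (Fin n) (Fin n) ℝ)
    (hnn : ∀ i j, 0 ≤ M i j)
    (hsub : ∀ j, ∑ i, M i j ≤ 1)
    (hspec : ∀ μ ∈ spectrum ℂ (M.map (Complex.ofReal)), ‖μ‖ < 1)
    (N0 : Finset (Fin n)) :
    let L : Matrix (Fin n) (Fin n) ℝ :=
      Matrix.diagonal fun i => if i ∈ N0 then 1 else 0
    ∀ i j, ((1 - L * M * L)⁻¹ * L) i j ≤ (L * (1 - M)⁻¹ * L) i j := by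
  intro L i j
  have hL0 : ∀ a b, 0 ≤ L a b := by
    intro a b
    by_cases h : a = b
    · subst h; simp only [L, Matrix.diagonal_apply_eq]; split <;> norm_num
    · simp [L, Matrix.diagonal_apply_ne _ h]
  have hLle1 : ∀ a b, L a b ≤ (1 : Matrix (Fin n) (Fin n) ℝ) a b := by
    intro a b
    by_cases h : a = b
    · subst h; simp only [L, Matrix.diagonal_apply_eq, Matrix.one_apply_eq]
      split <;> norm_num
    · simp [L, Matrix.diagonal_apply_ne _ h, Matrix.one_apply_ne h]
  have hLL : L * L = L := by
    show Matrix.diagonal _ * Matrix.diagonal _ = Matrix.diagonal _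
    rw [Matrix.diagonal_mul_diagonal]
    refine congrArg Matrix.diagonal (funext fun a => ?_)
    by_cases h : a ∈ N0 <;> simp [h]
  set B : Matrix (Fin n) (Fin n) ℝ := L * M * L with hBdef
  have hLM0 : ∀ a b, 0 ≤ (L * M) a b := mul_nonneg_entry' hL0 hnn
  have hB0 : ∀ a b, 0 ≤ B a b := mul_nonneg_entry' hLM0 hL0
  have hBle : ∀ a b, B a b ≤ M a b := by
    have h1 : ∀ a b, (L * M) a b ≤ ((1 : Matrix (Fin n) (Fin n) ℝ) * M) a b :=
      mul_entry_le' hL0 hnn hLle1 (fun _ _ => le_refl _)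
    have h2 : ∀ a b, (L * M * L) a b ≤ (M * (1 : Matrix (Fin n) (Fin n) ℝ)) a b := by
      refine mul_entry_le' hLM0 hL0 (fun a b => ?_) hLle1
      simpa using h1 a b
    intro a b
    simpa using h2 a b
  have hpowM := pow_entry_tendsto_zero' M hspec
  have hpowB : ∀ a b, Tendsto (fun k => (B ^ k) a b) atTop (𝓝 0) := by
    intro a b
    refine tendsto_of_tendsto_of_tendsto_of_le_of_le tendsto_const_nhds (hpowM a b) ?_ ?_
    · exact fun k => (pow_entry_le' hB0 hnn hBle k).1 a b
    · exact fun k => (pow_entry_le' hB0 hnn hBle k).2 a b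
  obtain ⟨hdetM, hSM⟩ := neumann' hpowM
  obtain ⟨hdetB, hSB⟩ := neumann' hpowB
  -- per-term comparison
  have hLB : L * B = B := by
    rw [hBdef, ← Matrix.mul_assoc, ← Matrix.mul_assoc, hLL]
  have hLBpow : ∀ m : ℕ, L * B ^ (m + 1) = B ^ (m + 1) := by
    intro m
    rw [pow_succ', ← Matrix.mul_assoc, hLB]
  have hterm : ∀ m : ℕ, ∀ a b, (B ^ m * L) a b ≤ (L * M ^ m * L) a b := by
    intro m
    cases m with
    | zero =>
      intro a b
      simp only [pow_zero, Matrix.one_mul, Matrix.mul_one, hLL]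
      exact le_refl _
    | succ m =>
      have hBp0 := (pow_entry_le' hB0 hnn hBle (m + 1)).1
      have hBpM := (pow_entry_le' hB0 hnn hBle (m + 1)).2
      have hMp0 := (pow_entry_le' hnn hnn (fun _ _ => le_refl _) (m + 1)).1
      have h1 : ∀ a b, (L * B ^ (m + 1)) a b ≤ (L * M ^ (m + 1)) a b :=
        mul_entry_le' hL0 hBp0 (fun _ _ => le_refl _) hBpM
      have h2 : ∀ a b, (L * B ^ (m + 1) * L) a b ≤ (L * M ^ (m + 1) * L) a b :=
        mul_entry_le' (mul_nonneg_entry' hL0 hBp0) hL0 h1 (fun _ _ => le_refl _)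
      intro a b
      have := h2 a b
      rwa [hLBpow m] at this
  have hsum : ∀ k : ℕ,
      ((∑ m ∈ range k, B ^ m) * L) i j ≤ (L * (∑ m ∈ range k, M ^ m) * L) i j := by
    intro k
    have e1 : (∑ m ∈ range k, B ^ m) * L = ∑ m ∈ range k, B ^ m * L :=
      Finset.sum_mul _ _ _
    have e2 : L * (∑ m ∈ range k, M ^ m) * L = ∑ m ∈ range k, L * M ^ m * L := by
      rw [Finset.mul_sum, Finset.sum_mul]
    rw [e1, e2, Matrix.sum_apply, Matrix.sum_apply]
    exact Finset.sum_le_sum fun m _ => hterm m i j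
  -- limits
  have hLHS : Tendsto (fun k => ((∑ m ∈ range k, B ^ m) * L) i j) atTop
      (𝓝 (((1 - B)⁻¹ * L) i j)) := by
    have := tendsto_mat_mul' hSB (tendsto_const_nhds (x := L) (f := atTop (α := ℕ)))
    exact tendsto_pi_nhds.mp (tendsto_pi_nhds.mp this i) j
  have hRHS : Tendsto (fun k => (L * (∑ m ∈ range k, M ^ m) * L) i j) atTop
      (𝓝 ((L * (1 - M)⁻¹ * L) i j)) := by
    have := tendsto_mat_mul'
      (tendsto_mat_mul' (tendsto_const_nhds (x := L) (f := atTop (α := ℕ))) hSM)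
      (tendsto_const_nhds (x := L) (f := atTop (α := ℕ)))
    exact tendsto_pi_nhds.mp (tendsto_pi_nhds.mp this i) j
  exact le_of_tendsto_of_tendsto' hLHS hRHS hsum
end

section
/- Let ||·|| be a norm on ℝ^n, C ⊆ ℝ^n nonempty, convex and compact, and Φ : C → C non-expansive with respect to the norm. Then the set of fixed points of Φ in C is nonempty, closed, and either a singleton or uncountable. -/
open Set

section Aux

variable {n : ℕ} {Nm : (Fin n → ℝ) → ℝ}

lemma nm_zero (hN0 : ∀ x : Fin n → ℝ, Nm x = 0 ↔ x = 0) : Nm 0 = 0 := (hN0 0).mpr rfl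

lemma nm_neg (hNsmul : ∀ (c : ℝ) (x : Fin n → ℝ), Nm (c • x) = |c| * Nm x)
    (x : Fin n → ℝ) : Nm (-x) = Nm x := by
  have := hNsmul (-1) x
  simpa using this

lemma nm_nonneg (hN0 : ∀ x : Fin n → ℝ, Nm x = 0 ↔ x = 0)
    (hNadd : ∀ x y : Fin n → ℝ, Nm (x + y) ≤ Nm x + Nm y)
    (hNsmul : ∀ (c : ℝ) (x : Fin n → ℝ), Nm (c • x) = |c| * Nm x)
    (x : Fin n → ℝ) : 0 ≤ Nm x := by
  have h := hNadd x (-x)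
  rw [add_neg_cancel, nm_zero hN0, nm_neg hNsmul] at h
  linarith

lemma nm_sub_le (hNadd : ∀ x y : Fin n → ℝ, Nm (x + y) ≤ Nm x + Nm y)
    (x y z : Fin n → ℝ) : Nm (x - z) ≤ Nm (x - y) + Nm (y - z) := by
  have := hNadd (x - y) (y - z)
  simpa using this

/-- Upper Lipschitz bound for `Nm` w.r.t. the sup-norm. -/
lemma nm_bound (hN0 : ∀ x : Fin n → ℝ, Nm x = 0 ↔ x = 0)
    (hNadd : ∀ x y : Fin n → ℝ, Nm (x + y) ≤ Nm x + Nm y)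
    (hNsmul : ∀ (c : ℝ) (x : Fin n → ℝ), Nm (c • x) = |c| * Nm x) :
    ∃ K : ℝ, 0 ≤ K ∧ ∀ x, Nm x ≤ K * ‖x‖ := by
  refine ⟨∑ i : Fin n, Nm (Pi.single i 1), Finset.sum_nonneg fun i _ =>
    nm_nonneg hN0 hNadd hNsmul _, fun x => ?_⟩
  have hx : x = ∑ i : Fin n, (x i) • (Pi.single i 1 : Fin n → ℝ) := by
    ext j
    simp [Finset.sum_apply, Pi.single_apply]
  calc Nm x = Nm (∑ i : Fin n, (x i) • (Pi.single i 1 : Fin n → ℝ)) := by rw [← hx]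
    _ ≤ ∑ i : Fin n, Nm ((x i) • (Pi.single i 1 : Fin n → ℝ)) :=
        Finset.le_sum_of_subadditive Nm (nm_zero hN0).le hNadd _ _
    _ = ∑ i : Fin n, |x i| * Nm (Pi.single i 1 : _) := by
        simp [hNsmul]
    _ ≤ ∑ i : Fin n, ‖x‖ * Nm (Pi.single i 1 : _) := by
        refine Finset.sum_le_sum fun i _ => ?_
        exact mul_le_mul_of_nonneg_right
          (by simpa using norm_le_pi_norm x i) (nm_nonneg hN0 hNadd hNsmul _)
    _ = (∑ i : Fin n, Nm (Pi.single i 1)) * ‖x‖ := by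
        rw [Finset.sum_mul]
        exact Finset.sum_congr rfl fun i _ => mul_comm _ _

lemma nm_continuous (hN0 : ∀ x : Fin n → ℝ, Nm x = 0 ↔ x = 0)
    (hNadd : ∀ x y : Fin n → ℝ, Nm (x + y) ≤ Nm x + Nm y)
    (hNsmul : ∀ (c : ℝ) (x : Fin n → ℝ), Nm (c • x) = |c| * Nm x) :
    Continuous Nm := by
  obtain ⟨K, hK0, hK⟩ := nm_bound hN0 hNadd hNsmul
  have : LipschitzWith (Real.toNNReal K) Nm := by
    refine LipschitzWith.of_dist_le_mul fun x y => ?_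
    rw [Real.dist_eq, Real.coe_toNNReal K hK0, dist_eq_norm]
    rw [abs_sub_le_iff]
    constructor
    · have h1 := hNadd (x - y) y
      have h2 := hK (x - y)
      simp only [sub_add_cancel] at h1
      linarith
    · have h1 := hNadd (y - x) x
      have h2 := hK (y - x)
      have h3 : Nm (y - x) = Nm (x - y) := by
        rw [← nm_neg hNsmul (x - y), neg_sub]
      simp only [sub_add_cancel] at h1
      rw [← dist_eq_norm, dist_comm, dist_eq_norm] at h2
      linarith
  exact this.continuous


/-- The displacement function `z ↦ Nm (Φ z - z)` is continuous on `C`. -/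
lemma nm_disp_continuousOn (hN0 : ∀ x : Fin n → ℝ, Nm x = 0 ↔ x = 0)
    (hNadd : ∀ x y : Fin n → ℝ, Nm (x + y) ≤ Nm x + Nm y)
    (hNsmul : ∀ (c : ℝ) (x : Fin n → ℝ), Nm (c • x) = |c| * Nm x)
    (C : Set (Fin n → ℝ))
    (Φ : (Fin n → ℝ) → (Fin n → ℝ))
    (hnonexp : ∀ x ∈ C, ∀ y ∈ C, Nm (Φ x - Φ y) ≤ Nm (x - y)) :
    ContinuousOn (fun z => Nm (Φ z - z)) C := by
  obtain ⟨K, hK0, hK⟩ := nm_bound hN0 hNadd hNsmul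
  refine LipschitzOnWith.continuousOn (K := Real.toNNReal (2 * K)) ?_
  refine LipschitzOnWith.of_dist_le_mul fun z hz w hw => ?_
  rw [Real.dist_eq, Real.coe_toNNReal _ (by linarith), dist_eq_norm]
  have key : ∀ a ∈ C, ∀ b ∈ C, Nm (Φ a - a) - Nm (Φ b - b) ≤ 2 * K * ‖a - b‖ := by
    intro a ha b hb
    have h1 : Nm (Φ a - a) ≤ Nm (Φ a - Φ b) + Nm (Φ b - a) := nm_sub_le hNadd _ _ _
    have h2 : Nm (Φ b - a) ≤ Nm (Φ b - b) + Nm (b - a) := nm_sub_le hNadd _ _ _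
    have h3 := hnonexp a ha b hb
    have h4 := hK (a - b)
    have h5 : Nm (b - a) = Nm (a - b) := by rw [← nm_neg hNsmul (a - b), neg_sub]
    rw [← dist_eq_norm] at h4 ⊢
    nlinarith [dist_nonneg (x := a) (y := b)]
  rw [abs_sub_le_iff]
  refine ⟨key z hz w hw, ?_⟩
  have := key w hw z hz
  rwa [norm_sub_rev] at this

/-- Existence of a fixed point of a nonexpansive self-map of a nonempty convex
compact set. -/
lemma nm_fixed_exists (hN0 : ∀ x : Fin n → ℝ, Nm x = 0 ↔ x = 0)
    (hNadd : ∀ x y : Fin n → ℝ, Nm (x + y) ≤ Nm x + Nm y)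
    (hNsmul : ∀ (c : ℝ) (x : Fin n → ℝ), Nm (c • x) = |c| * Nm x)
    (C : Set (Fin n → ℝ))
    (hCne : C.Nonempty) (hCconv : Convex ℝ C) (hCcomp : IsCompact C)
    (Φ : (Fin n → ℝ) → (Fin n → ℝ)) (hmaps : Set.MapsTo Φ C C)
    (hnonexp : ∀ x ∈ C, ∀ y ∈ C, Nm (Φ x - Φ y) ≤ Nm (x - y)) :
    ∃ x ∈ C, Φ x = x := by
  classical
  obtain ⟨K, hK0, hK⟩ := nm_bound hN0 hNadd hNsmul
  obtain ⟨x₀, hx₀⟩ := hCne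
  -- bound on Nm over differences of C
  obtain ⟨R, hR⟩ := hCcomp.isBounded.subset_closedBall 0
  set D : ℝ := K * (2 * R) with hD
  have hDiam : ∀ z ∈ C, ∀ w ∈ C, Nm (z - w) ≤ D := by
    intro z hz w hw
    have h1 : ‖z - w‖ ≤ 2 * R := by
      have hz' := hR hz
      have hw' := hR hw
      simp only [Metric.mem_closedBall, dist_zero_right] at hz' hw'
      calc ‖z - w‖ ≤ ‖z‖ + ‖w‖ := norm_sub_le _ _
        _ ≤ 2 * R := by linarith
    calc Nm (z - w) ≤ K * ‖z - w‖ := hK _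
      _ ≤ K * (2 * R) := by
          exact mul_le_mul_of_nonneg_left h1 hK0
  have hD0 : 0 ≤ D := le_trans (nm_nonneg hN0 hNadd hNsmul (x₀ - x₀)) (hDiam _ hx₀ _ hx₀)
  -- the displacement function
  set g : (Fin n → ℝ) → ℝ := fun z => Nm (Φ z - z) with hg
  have hgcont : ContinuousOn g C := nm_disp_continuousOn hN0 hNadd hNsmul C Φ hnonexp
  obtain ⟨x, hxC, hxmin⟩ := hCcomp.exists_isMinOn ⟨x₀, hx₀⟩ hgcont
  refine ⟨x, hxC, ?_⟩
  rw [← sub_eq_zero, ← hN0]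
  have hg0 : 0 ≤ g x := nm_nonneg hN0 hNadd hNsmul _
  have hsmall : ∀ δ > 0, g x < δ := by
    intro δ hδ
    -- choose ε and the iteration
    set ε : ℝ := min (δ / (2 * (D + 1))) (1/2) with hε
    have hεpos : 0 < ε := lt_min (by positivity) (by norm_num)
    have hεle : ε ≤ 1/2 := min_le_right _ _
    have hε1 : ε < 1 := by linarith
    -- iterate
    set a : ℕ → (Fin n → ℝ) := fun k => Nat.rec x₀ (fun _ p => (1 - ε) • Φ p + ε • x₀) k with ha
    have haC : ∀ k, a k ∈ C := by
      intro k
      induction k with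
      | zero => exact hx₀
      | succ k ih =>
        exact hCconv (hmaps ih) hx₀ (by linarith) (le_of_lt hεpos) (by ring)
    have hstep : ∀ k, a (k + 1) - a k = (1 - ε) • (Φ (a k) - (if k = 0 then x₀ else Φ (a (k-1)))) := by
      intro k
      cases k with
      | zero =>
        simp only [ha]
        simp [smul_sub]
        module
      | succ k =>
        simp only [ha, if_neg (Nat.succ_ne_zero k)]
        simp only [Nat.add_sub_cancel]
        module
    have hgeo : ∀ k, Nm (a (k + 1) - a k) ≤ (1 - ε) ^ k * D := by
      intro k
      induction k with
      | zero =>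
        rw [hstep 0]
        simp only [if_pos rfl, hNsmul, pow_zero, one_mul]
        have h1 : |1 - ε| = 1 - ε := abs_of_nonneg (by linarith)
        rw [h1]
        calc (1 - ε) * Nm (Φ (a 0) - x₀) ≤ 1 * Nm (Φ (a 0) - x₀) := by
              refine mul_le_mul_of_nonneg_right (by linarith) (nm_nonneg hN0 hNadd hNsmul _)
          _ ≤ D := by rw [one_mul]; exact hDiam _ (hmaps (haC 0)) _ hx₀
      | succ k ih =>
        rw [hstep (k+1)]
        simp only [if_neg (Nat.succ_ne_zero k), Nat.add_sub_cancel, hNsmul]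
        have h1 : |1 - ε| = 1 - ε := abs_of_nonneg (by linarith)
        rw [h1]
        have h2 : Nm (Φ (a (k+1)) - Φ (a k)) ≤ Nm (a (k+1) - a k) :=
          hnonexp _ (haC (k+1)) _ (haC k)
        calc (1 - ε) * Nm (Φ (a (k+1)) - Φ (a k)) ≤ (1 - ε) * ((1 - ε) ^ k * D) := by
              refine mul_le_mul_of_nonneg_left (le_trans h2 ih) (by linarith)
          _ = (1 - ε) ^ (k + 1) * D := by ring
    -- g (a k) bound
    have hgk : ∀ k, g (a k) ≤ ε * D + (1 - ε) ^ k * D := by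
      intro k
      have h1 : Φ (a k) - a (k+1) = ε • (Φ (a k) - x₀) := by
        cases k with
        | zero => simp only [ha]; module
        | succ k => simp only [ha]; module
      have h2 : Nm (Φ (a k) - a (k+1)) = ε * Nm (Φ (a k) - x₀) := by
        rw [h1, hNsmul, abs_of_pos hεpos]
      have h3 : g (a k) ≤ Nm (Φ (a k) - a (k+1)) + Nm (a (k+1) - a k) :=
        nm_sub_le hNadd _ _ _
      have h4 : Nm (Φ (a k) - x₀) ≤ D := hDiam _ (hmaps (haC k)) _ hx₀
      have h5 := hgeo k
      calc g (a k) ≤ ε * Nm (Φ (a k) - x₀) + Nm (a (k+1) - a k) := by rw [← h2]; exact h3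
        _ ≤ ε * D + (1 - ε) ^ k * D := by
            refine add_le_add (mul_le_mul_of_nonneg_left h4 (le_of_lt hεpos)) h5
    -- choose k large
    have h1ε : |1 - ε| < 1 := by rw [abs_of_nonneg (by linarith)]; linarith
    obtain ⟨k, hk⟩ := Metric.tendsto_atTop.mp
      (tendsto_pow_atTop_nhds_zero_of_abs_lt_one h1ε) (δ / (2 * (D + 1))) (by positivity)
    have hk' := hk k le_rfl
    rw [Real.dist_eq, sub_zero] at hk'
    have hpow : (1 - ε) ^ k ≤ |(1 - ε) ^ k| := le_abs_self _
    have hhalf : (δ / (2 * (D + 1))) * (D + 1) = δ / 2 := by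
      field_simp
    have hεD : ε * D ≤ δ / 2 := by
      calc ε * D ≤ ε * (D + 1) :=
            mul_le_mul_of_nonneg_left (by linarith) (le_of_lt hεpos)
        _ ≤ (δ / (2 * (D + 1))) * (D + 1) :=
            mul_le_mul_of_nonneg_right (min_le_left _ _) (by positivity)
        _ = δ / 2 := hhalf
    have hpD : (1 - ε) ^ k * D < δ / 2 := by
      calc (1 - ε) ^ k * D ≤ |(1 - ε) ^ k| * D := mul_le_mul_of_nonneg_right hpow hD0
        _ ≤ |(1 - ε) ^ k| * (D + 1) :=
            mul_le_mul_of_nonneg_left (by linarith) (abs_nonneg _)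
        _ < (δ / (2 * (D + 1))) * (D + 1) :=
            mul_lt_mul_of_pos_right hk' (by positivity)
        _ = δ / 2 := hhalf
    calc g x ≤ g (a k) := hxmin (haC k)
      _ ≤ ε * D + (1 - ε) ^ k * D := hgk k
      _ < δ := by linarith
  by_contra hne
  have hpos : 0 < g x := lt_of_le_of_ne hg0 (Ne.symm hne)
  exact absurd (hsmall (g x) hpos) (lt_irrefl _)

end Aux

/-- For a (not necessarily strictly convex) norm `Nm` on ℝⁿ, a
nonempty convex compact set `C` and a map `Φ` of `C` into itself which is
non-expansive with respect to `Nm`, the set of fixed points of `Φ` in `C` is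
nonempty, closed, and either a singleton or uncountable. -/
theorem nonexpansive_fixed_point_set {n : ℕ}
    (Nm : (Fin n → ℝ) → ℝ)
    (hN0 : ∀ x, Nm x = 0 ↔ x = 0)
    (hNadd : ∀ x y, Nm (x + y) ≤ Nm x + Nm y)
    (hNsmul : ∀ (c : ℝ) (x : Fin n → ℝ), Nm (c • x) = |c| * Nm x)
    (C : Set (Fin n → ℝ))
    (hCne : C.Nonempty) (hCconv : Convex ℝ C) (hCcomp : IsCompact C)
    (Φ : (Fin n → ℝ) → (Fin n → ℝ)) (hmaps : Set.MapsTo Φ C C)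
    (hnonexp : ∀ x ∈ C, ∀ y ∈ C, Nm (Φ x - Φ y) ≤ Nm (x - y)) :
    let S : Set (Fin n → ℝ) := {x ∈ C | Φ x = x}
    S.Nonempty ∧ IsClosed S ∧ ((∃ x, S = {x}) ∨ ¬ S.Countable) := by
  intro S
  have hNc := nm_continuous hN0 hNadd hNsmul
  -- nonemptiness
  obtain ⟨xfix, hxfixC, hxfix⟩ :=
    nm_fixed_exists hN0 hNadd hNsmul C hCne hCconv hCcomp Φ hmaps hnonexp
  have hSne : S.Nonempty := ⟨xfix, hxfixC, hxfix⟩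
  -- closedness
  have hSeq : S = C ∩ (fun z => Nm (Φ z - z)) ⁻¹' {0} := by
    ext z
    simp only [S, Set.mem_setOf_eq, Set.mem_inter_iff, Set.mem_preimage,
      Set.mem_singleton_iff]
    constructor
    · rintro ⟨hz, hfz⟩
      exact ⟨hz, by rw [(hN0 _), sub_eq_zero, hfz]⟩
    · rintro ⟨hz, hfz⟩
      rw [(hN0 _), sub_eq_zero] at hfz
      exact ⟨hz, hfz⟩
  have hSclosed : IsClosed S := by
    rw [hSeq]
    exact (nm_disp_continuousOn hN0 hNadd hNsmul C Φ hnonexp).preimage_isClosed_of_isClosed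
      hCcomp.isClosed isClosed_singleton
  refine ⟨hSne, hSclosed, ?_⟩
  by_cases huniq : ∀ y ∈ S, y = xfix
  · left
    exact ⟨xfix, Set.eq_singleton_iff_unique_mem.mpr ⟨⟨hxfixC, hxfix⟩, huniq⟩⟩
  · right
    push_neg at huniq
    obtain ⟨y₀, hy₀S, hy₀ne⟩ := huniq
    set x₀ : Fin n → ℝ := xfix with hx₀def
    have hx₀S : x₀ ∈ S := ⟨hxfixC, hxfix⟩
    set d : ℝ := Nm (y₀ - x₀) with hd
    have hd0 : 0 < d := by
      rcases lt_or_eq_of_le (nm_nonneg hN0 hNadd hNsmul (y₀ - x₀)) with h | h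
      · exact h
      · exfalso
        apply hy₀ne
        have := (hN0 (y₀ - x₀)).mp h.symm
        rwa [sub_eq_zero] at this
    have hsymm : ∀ a b : Fin n → ℝ, Nm (a - b) = Nm (b - a) := by
      intro a b
      rw [← nm_neg hNsmul (b - a), neg_sub]
    -- for each t ∈ [0,1] there is a fixed point at Nm-distance t*d from x₀
    have key : ∀ t ∈ Icc (0:ℝ) 1, ∃ z ∈ S, Nm (z - x₀) = t * d := by
      intro t ⟨ht0, ht1⟩
      set Ct : Set (Fin n → ℝ) :=
        {z ∈ C | Nm (z - x₀) ≤ t * d ∧ Nm (z - y₀) ≤ (1 - t) * d} with hCt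
      have hCtne : Ct.Nonempty := by
        refine ⟨(1 - t) • x₀ + t • y₀, hCconv hx₀S.1 hy₀S.1 (by linarith) ht0 (by ring), ?_, ?_⟩
        · have h1 : (1 - t) • x₀ + t • y₀ - x₀ = t • (y₀ - x₀) := by module
          rw [h1, hNsmul, abs_of_nonneg ht0]
        · have h1 : (1 - t) • x₀ + t • y₀ - y₀ = (1 - t) • (x₀ - y₀) := by module
          rw [h1, hNsmul, abs_of_nonneg (by linarith : (0:ℝ) ≤ 1 - t), hsymm x₀ y₀]
      have hCtconv : Convex ℝ Ct := by
        intro z hz w hw a b ha hb hab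
        refine ⟨hCconv hz.1 hw.1 ha hb hab, ?_, ?_⟩
        · have h1 : a • z + b • w - x₀ = a • (z - x₀) + b • (w - x₀) := by
            have hb' : b = 1 - a := by linarith
            rw [hb']; module
          calc Nm (a • z + b • w - x₀) ≤ Nm (a • (z - x₀)) + Nm (b • (w - x₀)) := by
                rw [h1]; exact hNadd _ _
            _ = a * Nm (z - x₀) + b * Nm (w - x₀) := by
                rw [hNsmul, hNsmul, abs_of_nonneg ha, abs_of_nonneg hb]
            _ ≤ a * (t * d) + b * (t * d) := by
                refine add_le_add (mul_le_mul_of_nonneg_left hz.2.1 ha)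
                  (mul_le_mul_of_nonneg_left hw.2.1 hb)
            _ = t * d := by rw [← add_mul, hab, one_mul]
        · have h1 : a • z + b • w - y₀ = a • (z - y₀) + b • (w - y₀) := by
            have hb' : b = 1 - a := by linarith
            rw [hb']; module
          calc Nm (a • z + b • w - y₀) ≤ Nm (a • (z - y₀)) + Nm (b • (w - y₀)) := by
                rw [h1]; exact hNadd _ _
            _ = a * Nm (z - y₀) + b * Nm (w - y₀) := by
                rw [hNsmul, hNsmul, abs_of_nonneg ha, abs_of_nonneg hb]
            _ ≤ a * ((1 - t) * d) + b * ((1 - t) * d) := by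
                refine add_le_add (mul_le_mul_of_nonneg_left hz.2.2 ha)
                  (mul_le_mul_of_nonneg_left hw.2.2 hb)
            _ = (1 - t) * d := by rw [← add_mul, hab, one_mul]
      have hCtcomp : IsCompact Ct := by
        refine hCcomp.of_isClosed_subset ?_ (fun z hz => hz.1)
        have hc1 : IsClosed {z : Fin n → ℝ | Nm (z - x₀) ≤ t * d} :=
          isClosed_le (hNc.comp (continuous_id.sub continuous_const)) continuous_const
        have hc2 : IsClosed {z : Fin n → ℝ | Nm (z - y₀) ≤ (1 - t) * d} :=
          isClosed_le (hNc.comp (continuous_id.sub continuous_const)) continuous_const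
        have : Ct = C ∩ ({z | Nm (z - x₀) ≤ t * d} ∩ {z | Nm (z - y₀) ≤ (1 - t) * d}) := by
          ext z
          simp only [hCt, Set.mem_setOf_eq, Set.mem_inter_iff]
        rw [this]
        exact hCcomp.isClosed.inter (hc1.inter hc2)
      have hCtsub : Ct ⊆ C := fun z hz => hz.1
      have hCtmaps : Set.MapsTo Φ Ct Ct := by
        intro z hz
        refine ⟨hmaps hz.1, ?_, ?_⟩
        · calc Nm (Φ z - x₀) = Nm (Φ z - Φ x₀) := by rw [hx₀S.2]
            _ ≤ Nm (z - x₀) := hnonexp z hz.1 x₀ hx₀S.1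
            _ ≤ t * d := hz.2.1
        · calc Nm (Φ z - y₀) = Nm (Φ z - Φ y₀) := by rw [hy₀S.2]
            _ ≤ Nm (z - y₀) := hnonexp z hz.1 y₀ hy₀S.1
            _ ≤ (1 - t) * d := hz.2.2
      obtain ⟨z, hzCt, hzfix⟩ := nm_fixed_exists hN0 hNadd hNsmul Ct hCtne hCtconv hCtcomp
        Φ hCtmaps (fun a ha b hb => hnonexp a (hCtsub ha) b (hCtsub hb))
      refine ⟨z, ⟨hCtsub hzCt, hzfix⟩, le_antisymm hzCt.2.1 ?_⟩
      -- lower bound via triangle inequality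
      have h1 : d ≤ Nm (y₀ - z) + Nm (z - x₀) := by
        have := nm_sub_le hNadd y₀ z x₀
        linarith
      have h2 : Nm (y₀ - z) ≤ (1 - t) * d := by rw [← hsymm]; exact hzCt.2.2
      linarith
    -- conclude uncountability
    intro hScount
    have himg : ((fun z => Nm (z - x₀)) '' S).Countable := hScount.image _
    have hsub : Icc (0:ℝ) d ⊆ (fun z => Nm (z - x₀)) '' S := by
      rintro r ⟨hr0, hrd⟩
      obtain ⟨z, hzS, hz⟩ := key (r / d) ⟨div_nonneg hr0 hd0.le, by
        rw [div_le_one hd0]; exact hrd⟩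
      rw [div_mul_cancel₀ _ (ne_of_gt hd0)] at hz
      exact ⟨z, hzS, hz⟩
    have hIccCount : (Icc (0:ℝ) d).Countable := himg.mono hsub
    have h1 := Cardinal.le_aleph0_iff_set_countable.mpr hIccCount
    rw [Cardinal.mk_Icc_real hd0] at h1
    exact absurd h1 (not_le.mpr Cardinal.aleph0_lt_continuum)
end

section
/- The map Φ(r,s) = (min{d, a + M^d r + M^s s}, (a + M^d r + M^s s − d)^+) maps the interval [R_min, R_max] into itself, where R_min = (min{d,a}, (a−d)^+) and R_max = (d, (I − M^s)^{-1}(a + M^d d − d)^+). -/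
open Matrix Finset Filter Topology

/-- A left substochastic matrix: nonnegative entries, column sums at most 1. -/
def Substoch {n : ℕ} (M : Matrix (Fin n) (Fin n) ℝ) : Prop :=
  (∀ i j, 0 ≤ M i j) ∧ ∀ j, ∑ i, M i j ≤ 1

/-- The Elsinger Property: no nonempty subset `J` of indices with all column
sums over `J` (for columns in `J`) equal to 1. -/
def Elsinger {n : ℕ} (M : Matrix (Fin n) (Fin n) ℝ) : Prop :=
  ∀ J : Finset (Fin n), J.Nonempty → ¬ (∀ j ∈ J, ∑ i ∈ J, M i j = 1)

namespace PhiAux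

variable {n : ℕ} (M : Matrix (Fin n) (Fin n) ℝ)

lemma mulVec_apply' (v : Fin n → ℝ) (i : Fin n) : M.mulVec v i = ∑ j, M i j * v j := by
  simp [Matrix.mulVec, dotProduct]

lemma pow_entry_nonneg (h0 : ∀ i j, 0 ≤ M i j) : ∀ k i j, 0 ≤ (M ^ k) i j := by
  intro k
  induction k with
  | zero => intro i j; by_cases h : i = j <;> simp [Matrix.one_apply, h]
  | succ k ih =>
    intro i j
    rw [pow_succ, Matrix.mul_apply]
    exact Finset.sum_nonneg fun j' _ => mul_nonneg (ih i j') (h0 j' j)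

lemma colsum_succ (k : ℕ) (j : Fin n) :
    ∑ i, (M ^ (k+1)) i j = ∑ j', (∑ i, (M ^ k) i j') * M j' j := by
  rw [pow_succ]
  simp only [Matrix.mul_apply]
  rw [Finset.sum_comm]
  simp [Finset.sum_mul]

lemma colsum_le_one (hM : Substoch M) : ∀ k j, ∑ i, (M ^ k) i j ≤ 1 := by
  intro k
  induction k with
  | zero => intro j; simp [Matrix.one_apply]
  | succ k ih =>
    intro j
    rw [colsum_succ]
    calc ∑ j', (∑ i, (M ^ k) i j') * M j' j ≤ ∑ j', 1 * M j' j := by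
          refine Finset.sum_le_sum fun j' _ => mul_le_mul_of_nonneg_right (ih j') (hM.1 j' j)
      _ = ∑ j', M j' j := by simp
      _ ≤ 1 := hM.2 j

lemma colsum_antitone (hM : Substoch M) : ∀ k j, ∑ i, (M ^ (k+1)) i j ≤ ∑ i, (M ^ k) i j := by
  intro k
  induction k with
  | zero =>
    intro j
    simpa [Matrix.one_apply] using colsum_le_one M hM 1 j
  | succ k ih =>
    intro j
    rw [colsum_succ M (k+1), colsum_succ M k]
    exact Finset.sum_le_sum fun j' _ => mul_le_mul_of_nonneg_right (ih j') (hM.1 j' j)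






/-- The set of "full" columns at step k. -/
noncomputable def Jset (k : ℕ) : Finset (Fin n) :=
  Finset.univ.filter (fun j => ∑ i, (M ^ k) i j = 1)

lemma Jset_succ_subset (hM : Substoch M) (k : ℕ) : Jset M (k+1) ⊆ Jset M k := by
  intro j hj
  simp only [Jset, Finset.mem_filter, Finset.mem_univ, true_and] at hj ⊢
  have h1 := colsum_antitone M hM k j
  have h2 := colsum_le_one M hM k j
  linarith

lemma Jset_ssubset (hM : Substoch M) (hE : Elsinger M) (k : ℕ) (hk : (Jset M k).Nonempty) :
    Jset M (k+1) ⊂ Jset M k := by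
  refine Finset.ssubset_iff_subset_ne.2 ⟨Jset_succ_subset M hM k, ?_⟩
  intro heq
  refine hE (Jset M k) hk ?_
  intro j hj
  -- j ∈ Jset (k+1) too
  have hj1 : ∑ i, (M ^ (k+1)) i j = 1 := by
    have : j ∈ Jset M (k+1) := heq ▸ hj
    simpa [Jset] using this
  rw [colsum_succ] at hj1
  set p : Fin n → Prop := fun j' => ∑ i, (M ^ k) i j' = 1 with hp
  have hsplit := Finset.sum_filter_add_sum_filter_not Finset.univ p
      (fun j' => (∑ i, (M ^ k) i j') * M j' j)
  have hA : ∑ j' ∈ Finset.univ.filter p, (∑ i, (M ^ k) i j') * M j' j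
      = ∑ j' ∈ Finset.univ.filter p, M j' j := by
    refine Finset.sum_congr rfl fun j' hj' => ?_
    have : ∑ i, (M ^ k) i j' = 1 := (Finset.mem_filter.1 hj').2
    rw [this, one_mul]
  -- B ≤ B'
  have hBle : ∑ j' ∈ Finset.univ.filter (fun x => ¬ p x), (∑ i, (M ^ k) i j') * M j' j
      ≤ ∑ j' ∈ Finset.univ.filter (fun x => ¬ p x), M j' j := by
    refine Finset.sum_le_sum fun j' _ => ?_
    have := colsum_le_one M hM k j'
    nlinarith [hM.1 j' j]
  -- total ≤ 1
  have htot : ∑ j' ∈ Finset.univ.filter p, M j' j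
      + ∑ j' ∈ Finset.univ.filter (fun x => ¬ p x), M j' j ≤ 1 := by
    rw [Finset.sum_filter_add_sum_filter_not]
    exact hM.2 j
  -- hence B = B'
  have hBeq : ∑ j' ∈ Finset.univ.filter (fun x => ¬ p x), (∑ i, (M ^ k) i j') * M j' j
      = ∑ j' ∈ Finset.univ.filter (fun x => ¬ p x), M j' j := by
    rw [hA] at hsplit
    linarith
  -- termwise equality forces M j' j = 0 off Jset
  have hzero : ∀ j' ∈ Finset.univ.filter (fun x => ¬ p x), M j' j = 0 := by
    intro j' hj'
    by_contra hne
    have hpos : 0 < M j' j := lt_of_le_of_ne (hM.1 j' j) (Ne.symm hne)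
    have hlt : ∑ i, (M ^ k) i j' < 1 :=
      lt_of_le_of_ne (colsum_le_one M hM k j') ((Finset.mem_filter.1 hj').2)
    have hstrict : ∑ x ∈ Finset.univ.filter (fun x => ¬ p x), (∑ i, (M ^ k) i x) * M x j
        < ∑ x ∈ Finset.univ.filter (fun x => ¬ p x), M x j := by
      refine Finset.sum_lt_sum (fun x hx => ?_) ⟨j', hj', ?_⟩
      · have := colsum_le_one M hM k x
        nlinarith [hM.1 x j]
      · nlinarith
    linarith [hBeq, hstrict]
  have hB'zero : ∑ j' ∈ Finset.univ.filter (fun x => ¬ p x), M j' j = 0 :=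
    Finset.sum_eq_zero hzero
  have hfin : ∑ j' ∈ Finset.univ.filter p, M j' j = 1 := by
    linarith [hsplit, hBeq, hB'zero, hj1]
  simpa [Jset, hp] using hfin

lemma Jset_card (hM : Substoch M) (hE : Elsinger M) :
    ∀ k, (Jset M k).Nonempty → (Jset M k).card + k ≤ n := by
  intro k
  induction k with
  | zero =>
    intro _
    simpa using (Finset.card_le_univ (Jset M 0)).trans (by simp)
  | succ k ih =>
    intro hne
    have hnek : (Jset M k).Nonempty :=
      hne.mono (Jset_succ_subset M hM k)
    have h1 := ih hnek
    have h2 : (Jset M (k+1)).card < (Jset M k).card :=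
      Finset.card_lt_card (Jset_ssubset M hM hE k hnek)
    omega

lemma colsum_n_lt_one (hM : Substoch M) (hE : Elsinger M) (j : Fin n) :
    ∑ i, (M ^ n) i j < 1 := by
  refine lt_of_le_of_ne (colsum_le_one M hM n j) ?_
  intro heq
  have : (Jset M n).Nonempty := ⟨j, by simp [Jset, heq]⟩
  have := Jset_card M hM hE n this
  have : 1 ≤ (Jset M n).card := Finset.card_pos.2 ‹(Jset M n).Nonempty›
  omega




lemma colsum_mul (A B : Matrix (Fin n) (Fin n) ℝ) (j : Fin n) :
    ∑ i, (A * B) i j = ∑ j', (∑ i, A i j') * B j' j := by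
  simp only [Matrix.mul_apply]
  rw [Finset.sum_comm]
  simp [Finset.sum_mul]

lemma mulVec_mono (h0 : ∀ i j, 0 ≤ M i j) {x y : Fin n → ℝ} (h : x ≤ y) :
    M.mulVec x ≤ M.mulVec y := by
  intro i
  rw [mulVec_apply', mulVec_apply']
  exact Finset.sum_le_sum fun j _ => mul_le_mul_of_nonneg_left (h j) (h0 i j)

lemma le_zero_of_le_mulVec (hM : Substoch M) (hE : Elsinger M)
    (x : Fin n → ℝ) (hx : x ≤ M.mulVec x) : x ≤ 0 := by
  rcases Nat.eq_zero_or_pos n with hn | hn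
  · intro i
    exact absurd i.isLt (by omega)
  haveI : Nonempty (Fin n) := ⟨⟨0, hn⟩⟩
  set c : ℝ := Finset.univ.sup' Finset.univ_nonempty (fun j => ∑ i, (M ^ n) i j) with hc
  have hcol : ∀ j, ∑ i, (M ^ n) i j ≤ c := fun j =>
    Finset.le_sup' (fun j => ∑ i, (M ^ n) i j) (Finset.mem_univ j)
  have hc1 : c < 1 := by
    rw [hc, Finset.sup'_lt_iff]
    exact fun j _ => colsum_n_lt_one M hM hE j
  have hc0 : 0 ≤ c := by
    refine le_trans ?_ (hcol (Classical.arbitrary (Fin n)))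
    exact Finset.sum_nonneg fun i _ => pow_entry_nonneg M hM.1 n i _
  -- geometric decay of column sums
  have hdecay : ∀ k j, ∑ i, (M ^ (n * k)) i j ≤ c ^ k := by
    intro k
    induction k with
    | zero => intro j; simp [Matrix.one_apply]
    | succ k ih =>
      intro j
      have hstep : M ^ (n * (k + 1)) = M ^ (n * k) * M ^ n := by
        rw [← pow_add]; ring_nf
      rw [hstep, colsum_mul]
      calc ∑ j', (∑ i, (M ^ (n * k)) i j') * (M ^ n) j' j
          ≤ ∑ j', c ^ k * (M ^ n) j' j := by
            exact Finset.sum_le_sum fun j' _ =>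
              mul_le_mul_of_nonneg_right (ih j') (pow_entry_nonneg M hM.1 n j' j)
        _ = c ^ k * ∑ j', (M ^ n) j' j := by rw [Finset.mul_sum]
        _ ≤ c ^ k * c := mul_le_mul_of_nonneg_left (hcol j) (pow_nonneg hc0 k)
        _ = c ^ (k + 1) := by ring
  -- x ≤ M^k x
  have hpow : ∀ k, x ≤ (M ^ k).mulVec x := by
    intro k
    induction k with
    | zero => rw [pow_zero, Matrix.one_mulVec]
    | succ k ih =>
      refine le_trans ih ?_
      have : (M ^ (k+1)).mulVec x = (M ^ k).mulVec (M.mulVec x) := by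
        rw [Matrix.mulVec_mulVec, ← pow_succ]
      rw [this]
      exact mulVec_mono (M ^ k) (pow_entry_nonneg M hM.1 k) hx
  intro i
  have key : ∀ k : ℕ, x i ≤ c ^ k * ∑ j, |x j| := by
    intro k
    have h1 := hpow (n * k) i
    rw [mulVec_apply'] at h1
    refine h1.trans ?_
    rw [Finset.mul_sum]
    refine Finset.sum_le_sum fun j _ => ?_
    have hentry : (M ^ (n * k)) i j ≤ c ^ k := by
      refine le_trans ?_ (hdecay k j)
      exact Finset.single_le_sum (fun i' _ => pow_entry_nonneg M hM.1 (n*k) i' j)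
        (Finset.mem_univ i)
    calc (M ^ (n * k)) i j * x j ≤ (M ^ (n * k)) i j * |x j| :=
          mul_le_mul_of_nonneg_left (le_abs_self _) (pow_entry_nonneg M hM.1 (n*k) i j)
      _ ≤ c ^ k * |x j| := mul_le_mul_of_nonneg_right hentry (abs_nonneg _)
  have hlim : Tendsto (fun k : ℕ => c ^ k * ∑ j, |x j|) atTop (𝓝 0) := by
    have := (tendsto_pow_atTop_nhds_zero_of_lt_one hc0 hc1).mul_const (∑ j, |x j|)
    simpa using this
  have : x i ≤ 0 := le_of_tendsto_of_tendsto' tendsto_const_nhds hlim key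
  simpa using this

lemma det_one_sub_ne_zero (hM : Substoch M) (hE : Elsinger M) :
    (1 - M).det ≠ 0 := by
  intro hdet
  obtain ⟨v, hv0, hv⟩ := Matrix.exists_mulVec_eq_zero_iff.2 hdet
  have hveq : v = M.mulVec v := by
    have := hv
    rw [Matrix.sub_mulVec, Matrix.one_mulVec, sub_eq_zero] at this
    exact this
  have h1 : v ≤ 0 := le_zero_of_le_mulVec M hM hE v (le_of_eq hveq)
  have h2 : -v ≤ 0 := by
    refine le_zero_of_le_mulVec M hM hE (-v) ?_
    rw [Matrix.mulVec_neg, ← hveq]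
  refine hv0 (funext fun i => ?_)
  have h1i := h1 i
  have h2i := h2 i
  simp only [Pi.neg_apply, Pi.zero_apply, neg_nonpos] at h1i h2i
  simpa using le_antisymm h1i h2i

end PhiAux

/-- The liquidation value map `Φ(r,s) = (min{d, a+M^d r+M^s s}, (a+M^d r+M^s s−d)⁺)`. -/
noncomputable def Phi {n : ℕ} (a d : Fin n → ℝ) (Md Ms : Matrix (Fin n) (Fin n) ℝ)
    (R : (Fin n → ℝ) × (Fin n → ℝ)) : (Fin n → ℝ) × (Fin n → ℝ) :=
  (fun i => min (d i) (a i + Md.mulVec R.1 i + Ms.mulVec R.2 i),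
   fun i => max (a i + Md.mulVec R.1 i + Ms.mulVec R.2 i - d i) 0)

/-- The lower bound `R_min = (min{d,a}, (a−d)⁺)`. -/
noncomputable def Rmin {n : ℕ} (a d : Fin n → ℝ) : (Fin n → ℝ) × (Fin n → ℝ) :=
  (fun i => min (d i) (a i), fun i => max (a i - d i) 0)

/-- The upper bound `R_max = (d, (I−M^s)⁻¹ (a + M^d d − d)⁺)`. -/
noncomputable def Rmax {n : ℕ} (a d : Fin n → ℝ)
    (Md Ms : Matrix (Fin n) (Fin n) ℝ) : (Fin n → ℝ) × (Fin n → ℝ) :=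
  (d, (1 - Ms)⁻¹.mulVec fun i => max (a i + Md.mulVec d i - d i) 0)

/-- `Φ` maps the order interval `[R_min, R_max]` into itself. -/
theorem Phi_maps_interval {n : ℕ} (a d : Fin n → ℝ)
    (ha : ∀ i, 0 ≤ a i) (hd : ∀ i, 0 ≤ d i)
    (Md Ms : Matrix (Fin n) (Fin n) ℝ)
    (hMd : Substoch Md) (hMs : Substoch Ms)
    (hMdE : Elsinger Md) (hMsE : Elsinger Ms) :
    ∀ R : (Fin n → ℝ) × (Fin n → ℝ),
      Rmin a d ≤ R → R ≤ Rmax a d Md Ms →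
      Rmin a d ≤ Phi a d Md Ms R ∧ Phi a d Md Ms R ≤ Rmax a d Md Ms := by
  rintro ⟨r, s⟩ hlo hhi
  have hlo1 : ∀ i, min (d i) (a i) ≤ r i := fun i => hlo.1 i
  have hlo2 : ∀ i, max (a i - d i) 0 ≤ s i := fun i => hlo.2 i
  have hhi1 : ∀ i, r i ≤ d i := fun i => hhi.1 i
  set b : Fin n → ℝ := fun i => max (a i + Md.mulVec d i - d i) 0 with hbdef
  set z : Fin n → ℝ := (1 - Ms)⁻¹.mulVec b with hzdef
  have hhi2 : ∀ i, s i ≤ z i := fun i => hhi.2 i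
  have hb0 : ∀ i, 0 ≤ b i := fun i => le_max_right _ _
  have hdet : IsUnit (1 - Ms).det :=
    isUnit_iff_ne_zero.2 (PhiAux.det_one_sub_ne_zero Ms hMs hMsE)
  have hz : (1 - Ms).mulVec z = b := by
    rw [hzdef, Matrix.mulVec_mulVec, Matrix.mul_nonsing_inv _ hdet, Matrix.one_mulVec]
  have hzz : z = Ms.mulVec z + b := by
    rw [Matrix.sub_mulVec, Matrix.one_mulVec] at hz
    funext i
    have := congrFun hz i
    simp only [Pi.sub_apply] at this
    simp only [Pi.add_apply]
    linarith
  have hMsz_le : Ms.mulVec z ≤ z := by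
    intro i
    have := congrFun hzz i
    simp only [Pi.add_apply] at this
    linarith [hb0 i]
  have hz0 : ∀ i, 0 ≤ z i := by
    have hneg : -z ≤ Ms.mulVec (-z) := by
      rw [Matrix.mulVec_neg]
      intro i
      simp only [Pi.neg_apply]
      linarith [hMsz_le i]
    have := PhiAux.le_zero_of_le_mulVec Ms hMs hMsE (-z) hneg
    intro i
    have h := this i
    simp only [Pi.neg_apply, Pi.zero_apply] at h
    linarith
  have hr0 : ∀ i, 0 ≤ r i := fun i => le_trans (le_min (hd i) (ha i)) (hlo1 i)
  have hs0 : ∀ i, 0 ≤ s i := fun i => le_trans (le_max_right _ _) (hlo2 i)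
  have hMdr0 : ∀ i, 0 ≤ Md.mulVec r i := by
    intro i
    rw [PhiAux.mulVec_apply']
    exact Finset.sum_nonneg fun j _ => mul_nonneg (hMd.1 i j) (hr0 j)
  have hMss0 : ∀ i, 0 ≤ Ms.mulVec s i := by
    intro i
    rw [PhiAux.mulVec_apply']
    exact Finset.sum_nonneg fun j _ => mul_nonneg (hMs.1 i j) (hs0 j)
  have hMdr_le : Md.mulVec r ≤ Md.mulVec d := PhiAux.mulVec_mono Md hMd.1 hhi1
  have hMss_le : Ms.mulVec s ≤ Ms.mulVec z := PhiAux.mulVec_mono Ms hMs.1 hhi2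
  constructor
  · constructor
    · intro i
      simp only [Rmin, Phi]
      refine min_le_min (le_refl _) ?_
      have := hMdr0 i
      have := hMss0 i
      linarith
    · intro i
      simp only [Rmin, Phi]
      refine max_le_max ?_ (le_refl _)
      have := hMdr0 i
      have := hMss0 i
      linarith
  · constructor
    · intro i
      simp only [Rmax, Phi]
      exact min_le_left _ _
    · intro i
      simp only [Rmax, Phi]
      have hzi : z i = Ms.mulVec z i + b i := by
        have := congrFun hzz i
        simp only [Pi.add_apply] at this
        exact this
      have hbi : a i + Md.mulVec d i - d i ≤ b i := le_max_left _ _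
      have hgoal : a i + Md.mulVec r i + Ms.mulVec s i - d i ≤ z i := by
        linarith [hMdr_le i, hMss_le i, hbi, hzi]
      exact max_le hgoal (hz0 i)
end

section
/- With R_max = (d, s_max) and s_max = (I−M^s)^{-1}(a + M^d d − d)^+, one has Φ(R_max) ≤ R_max componentwise; in particular (a + M^d d + M^s s_max − d)^+ ≤ s_max. -/
open Matrix Finset Filter Topology

section Aux

variable {n : ℕ} {M : Matrix (Fin n) (Fin n) ℝ}

lemma pow_entry_nonneg (h0 : ∀ i j, 0 ≤ M i j) (k : ℕ) (i j : Fin n) :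
    0 ≤ (M ^ k) i j := by
  induction k generalizing i j with
  | zero => by_cases h : i = j <;> simp [Matrix.one_apply, h]
  | succ k ih =>
      rw [pow_succ, Matrix.mul_apply]
      exact Finset.sum_nonneg fun l _ => mul_nonneg (ih i l) (h0 l j)

lemma colsum_mul (A B : Matrix (Fin n) (Fin n) ℝ) (j : Fin n) :
    ∑ i, (A * B) i j = ∑ l, (∑ i, A i l) * B l j := by
  simp only [Matrix.mul_apply, Finset.sum_mul]
  exact Finset.sum_comm

lemma colsum_pow_le_one (hM : Substoch M) (k : ℕ) (j : Fin n) :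
    ∑ i, (M ^ k) i j ≤ 1 := by
  induction k generalizing j with
  | zero => simp [Matrix.one_apply]
  | succ k ih =>
      rw [pow_succ, colsum_mul]
      calc ∑ l, (∑ i, (M ^ k) i l) * M l j ≤ ∑ l, 1 * M l j :=
            Finset.sum_le_sum fun l _ => mul_le_mul_of_nonneg_right (ih l) (hM.1 l j)
        _ ≤ 1 := by simpa using hM.2 j

lemma colsum_pow_succ_le (hM : Substoch M) (k : ℕ) (j : Fin n) :
    ∑ i, (M ^ (k + 1)) i j ≤ ∑ i, (M ^ k) i j := by
  rw [pow_succ', colsum_mul]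
  calc ∑ l, (∑ i, M i l) * (M ^ k) l j ≤ ∑ l, 1 * (M ^ k) l j :=
        Finset.sum_le_sum fun l _ =>
          mul_le_mul_of_nonneg_right (hM.2 l) (pow_entry_nonneg hM.1 k l j)
    _ = ∑ i, (M ^ k) i j := by simp

lemma colsum_pow_antitone (hM : Substoch M) (j : Fin n) :
    Antitone fun k => ∑ i, (M ^ k) i j :=
  antitone_nat_of_succ_le fun k => colsum_pow_succ_le hM k j

/-- After `n` steps, every column sum of `M ^ n` is strictly less than 1. -/
lemma colsum_pow_card_lt_one (hM : Substoch M) (hE : Elsinger M) (j : Fin n) :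
    ∑ i, (M ^ n) i j < 1 := by
  classical
  set S : ℕ → Finset (Fin n) := fun k => univ.filter fun j => ∑ i, (M ^ k) i j < 1 with hS
  have hmem : ∀ k j, j ∈ S k ↔ ∑ i, (M ^ k) i j < 1 := by
    intro k j; simp [hS]
  have hmono : ∀ k, S k ⊆ S (k + 1) := by
    intro k j hj
    rw [hmem] at hj ⊢
    exact lt_of_le_of_lt (colsum_pow_succ_le hM k j) hj
  have hgrow : ∀ k, S k ≠ univ → S k ⊂ S (k + 1) := by
    intro k hne
    refine (Finset.ssubset_iff_of_subset (hmono k)).mpr ?_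
    have hJne : (S k)ᶜ.Nonempty := by
      rw [← Finset.card_pos, Finset.card_compl]
      have : (S k).card < Fintype.card (Fin n) := by
        refine lt_of_le_of_ne (Finset.card_le_univ _) fun h => hne ?_
        exact Finset.eq_univ_of_card _ (by simpa using h)
      omega
    have := hE _ hJne
    push_neg at this
    obtain ⟨j, hjJ, hjne⟩ := this
    have hjnotS : j ∉ S k := by simpa using hjJ
    have hcol1 : ∀ l ∈ (S k)ᶜ, ∑ i, (M ^ k) i l = 1 := by
      intro l hl
      have hl' : l ∉ S k := by simpa using hl
      rw [hmem] at hl'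
      exact le_antisymm (colsum_pow_le_one hM k l) (not_lt.mp hl')
    refine ⟨j, ?_, hjnotS⟩
    rw [hmem]
    have hsplit : ∑ i, (M ^ (k + 1)) i j
        = ∑ l ∈ (S k)ᶜ, (∑ i, (M ^ k) i l) * M l j
          + ∑ l ∈ S k, (∑ i, (M ^ k) i l) * M l j := by
      rw [pow_succ, colsum_mul, ← Finset.sum_compl_add_sum (S k)]
    have hJpart : ∑ l ∈ (S k)ᶜ, (∑ i, (M ^ k) i l) * M l j = ∑ l ∈ (S k)ᶜ, M l j := by
      refine Finset.sum_congr rfl fun l hl => by rw [hcol1 l hl, one_mul]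
    by_cases hpos : ∃ l ∈ S k, 0 < M l j
    · obtain ⟨l0, hl0, hl0pos⟩ := hpos
      have hlt : ∑ l ∈ S k, (∑ i, (M ^ k) i l) * M l j < ∑ l ∈ S k, M l j := by
        refine Finset.sum_lt_sum (fun l hl => ?_) ⟨l0, hl0, ?_⟩
        · nlinarith [colsum_pow_le_one hM k l, hM.1 l j]
        · have := (hmem k l0).mp hl0
          nlinarith [hM.1 l0 j]
      calc ∑ i, (M ^ (k + 1)) i j
          < ∑ l ∈ (S k)ᶜ, M l j + ∑ l ∈ S k, M l j := by
            rw [hsplit, hJpart]; exact add_lt_add_right hlt _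
        _ = ∑ l, M l j := Finset.sum_compl_add_sum _ _
        _ ≤ 1 := hM.2 j
    · push_neg at hpos
      have hz : ∀ l ∈ S k, M l j = 0 := fun l hl => le_antisymm (hpos l hl) (hM.1 l j)
      have hSzero : ∑ l ∈ S k, (∑ i, (M ^ k) i l) * M l j = 0 :=
        Finset.sum_eq_zero fun l hl => by rw [hz l hl, mul_zero]
      have hJle : ∑ l ∈ (S k)ᶜ, M l j ≤ 1 := by
        have : ∑ l ∈ (S k)ᶜ, M l j + ∑ l ∈ S k, M l j = ∑ l, M l j :=
          Finset.sum_compl_add_sum _ _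
        have hz' : ∑ l ∈ S k, M l j = 0 := Finset.sum_eq_zero hz
        rw [hz', add_zero] at this
        rw [this]; exact hM.2 j
      have hJlt : ∑ l ∈ (S k)ᶜ, M l j < 1 := lt_of_le_of_ne hJle hjne
      rw [hsplit, hJpart, hSzero, add_zero]
      exact hJlt
  have hcard : ∀ k, S k = univ ∨ k ≤ (S k).card := by
    intro k
    induction k with
    | zero => right; omega
    | succ k ih =>
        rcases ih with h | h
        · left
          exact Finset.eq_univ_iff_forall.mpr fun x => hmono k (h ▸ Finset.mem_univ x)
        · by_cases hu : S k = univ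
          · left
            exact Finset.eq_univ_iff_forall.mpr fun x => hmono k (hu ▸ Finset.mem_univ x)
          · right
            have := Finset.card_lt_card (hgrow k hu)
            omega
  have : S n = univ := by
    rcases hcard n with h | h
    · exact h
    · by_contra hne
      have hlt : (S n).card < n := by
        have := Finset.card_lt_card (Finset.ssubset_univ_iff.mpr hne)
        simpa using this
      omega
  have : j ∈ S n := this ▸ Finset.mem_univ j
  exact (hmem n j).mp this

end Aux

section Inv

variable {n : ℕ} {M : Matrix (Fin n) (Fin n) ℝ}

lemma geom_partial_le {c : ℝ} (hc0 : 0 ≤ c) (hc1 : c < 1) (K : ℕ) :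
    ∑ k ∈ Finset.range K, c ^ k ≤ (1 - c)⁻¹ := by
  have hpos : 0 < 1 - c := by linarith
  have h1 : (∑ k ∈ Finset.range K, c ^ k) * (c - 1) = c ^ K - 1 := geom_sum_mul c K
  have h2 : (∑ k ∈ Finset.range K, c ^ k) * (1 - c) = 1 - c ^ K := by linarith
  rw [inv_eq_one_div, le_div_iff₀ hpos, h2]
  have : 0 ≤ c ^ K := pow_nonneg hc0 K
  linarith

lemma summable_colsum_pow (hM : Substoch M) (hE : Elsinger M) (j : Fin n) :
    Summable fun k => ∑ i, (M ^ k) i j := by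
  classical
  have hnpos : 0 < n := j.pos
  obtain ⟨b, -, hb⟩ := Finset.exists_max_image Finset.univ
    (fun j => ∑ i, (M ^ n) i j) ⟨j, Finset.mem_univ j⟩
  set c : ℝ := ∑ i, (M ^ n) i b with hc
  have hc1 : c < 1 := colsum_pow_card_lt_one hM hE b
  have hc0 : 0 ≤ c := Finset.sum_nonneg fun i _ => pow_entry_nonneg hM.1 n i b
  have hcle : ∀ j', ∑ i, (M ^ n) i j' ≤ c := fun j' => hb j' (Finset.mem_univ j')
  have hblock : ∀ (k : ℕ) (j' : Fin n), ∑ i, (M ^ (n * k)) i j' ≤ c ^ k := by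
    intro k
    induction k with
    | zero => intro j'; simpa using colsum_pow_le_one hM 0 j'
    | succ k ih =>
        intro j'
        have : M ^ (n * (k + 1)) = M ^ (n * k) * M ^ n := by
          rw [← pow_add, Nat.mul_succ]
        rw [this, colsum_mul]
        calc ∑ l, (∑ i, (M ^ (n * k)) i l) * (M ^ n) l j'
            ≤ ∑ l, c ^ k * (M ^ n) l j' :=
              Finset.sum_le_sum fun l _ =>
                mul_le_mul_of_nonneg_right (ih l) (pow_entry_nonneg hM.1 n l j')
          _ = c ^ k * ∑ l, (M ^ n) l j' := by rw [Finset.mul_sum]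
          _ ≤ c ^ k * c := mul_le_mul_of_nonneg_left (hcle j') (pow_nonneg hc0 k)
          _ = c ^ (k + 1) := by ring
  set f : ℕ → ℝ := fun k => ∑ i, (M ^ k) i j with hf
  have hf0 : ∀ k, 0 ≤ f k := fun k => Finset.sum_nonneg fun i _ => pow_entry_nonneg hM.1 k i j
  have hanti : Antitone f := colsum_pow_antitone hM j
  have hpart : ∀ K, ∑ m ∈ Finset.range (n * K), f m ≤ (n : ℝ) * ∑ k ∈ Finset.range K, c ^ k := by
    intro K
    induction K with
    | zero => simp
    | succ K ih =>
        have hsplit : ∑ m ∈ Finset.range (n * (K + 1)), f m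
            = ∑ m ∈ Finset.range (n * K), f m + ∑ m ∈ Finset.Ico (n * K) (n * (K + 1)), f m := by
          simp only [Finset.range_eq_Ico]
          exact (Finset.sum_Ico_consecutive f (Nat.zero_le _)
            (Nat.mul_le_mul_left n (Nat.le_succ K))).symm
        have hIco : ∑ m ∈ Finset.Ico (n * K) (n * (K + 1)), f m ≤ (n : ℝ) * c ^ K := by
          have hbd : ∀ m ∈ Finset.Ico (n * K) (n * (K + 1)), f m ≤ c ^ K := by
            intro m hm
            have := (Finset.mem_Ico.mp hm).1
            exact (hanti this).trans (hblock K j)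
          calc ∑ m ∈ Finset.Ico (n * K) (n * (K + 1)), f m
              ≤ (Finset.Ico (n * K) (n * (K + 1))).card • c ^ K :=
                Finset.sum_le_card_nsmul _ _ _ hbd
            _ = (n : ℝ) * c ^ K := by
                have hcard : (Finset.Ico (n * K) (n * (K + 1))).card = n := by
                  rw [Nat.card_Ico, Nat.mul_succ]; omega
                rw [hcard, nsmul_eq_mul]
        rw [hsplit, Finset.sum_range_succ]
        linarith [mul_add (n : ℝ) (∑ k ∈ Finset.range K, c ^ k) (c ^ K)]
  refine summable_of_sum_range_le hf0 (c := (n : ℝ) * (1 - c)⁻¹) fun K => ?_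
  calc ∑ m ∈ Finset.range K, f m ≤ ∑ m ∈ Finset.range (n * K), f m := by
        refine Finset.sum_le_sum_of_subset_of_nonneg ?_ fun m _ _ => hf0 m
        exact Finset.range_subset_range.mpr (Nat.le_mul_of_pos_left K hnpos)
    _ ≤ (n : ℝ) * ∑ k ∈ Finset.range K, c ^ k := hpart K
    _ ≤ (n : ℝ) * (1 - c)⁻¹ :=
        mul_le_mul_of_nonneg_left (geom_partial_le hc0 hc1 K) (Nat.cast_nonneg n)

lemma summable_entry_pow (hM : Substoch M) (hE : Elsinger M) (i j : Fin n) :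
    Summable fun k => (M ^ k) i j := by
  refine Summable.of_nonneg_of_le (fun k => pow_entry_nonneg hM.1 k i j)
    (fun k => ?_) (summable_colsum_pow hM hE j)
  exact Finset.single_le_sum (fun l _ => pow_entry_nonneg hM.1 k l j) (Finset.mem_univ i)

lemma one_sub_mul_neumann (hM : Substoch M) (hE : Elsinger M) :
    (1 - M) * Matrix.of (fun i j => ∑' k, (M ^ k) i j) = 1 := by
  ext i j
  have hsum : ∀ l, Summable fun k => M i l * (M ^ k) l j :=
    fun l => (summable_entry_pow hM hE l j).mul_left _
  have hMB : (M * Matrix.of (fun i j => ∑' k, (M ^ k) i j)) i j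
      = ∑' k, (M ^ (k + 1)) i j := by
    rw [Matrix.mul_apply]
    have h1 : ∀ l, M i l * (∑' k, (M ^ k) l j) = ∑' k, M i l * (M ^ k) l j :=
      fun l => (tsum_mul_left).symm
    simp only [Matrix.of_apply]
    rw [Finset.sum_congr rfl fun l _ => h1 l, ← Summable.tsum_finsetSum fun l _ => hsum l]
    refine tsum_congr fun k => ?_
    rw [pow_succ', Matrix.mul_apply]
  have hshift : ∑' k, (M ^ k) i j = (1 : Matrix (Fin n) (Fin n) ℝ) i j
      + ∑' k, (M ^ (k + 1)) i j := by
    rw [Summable.tsum_eq_zero_add (summable_entry_pow hM hE i j)]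
    simp
  rw [Matrix.sub_mul, Matrix.one_mul, Matrix.sub_apply, hMB, Matrix.of_apply, hshift]
  ring

lemma inv_one_sub_eq (hM : Substoch M) (hE : Elsinger M) :
    (1 - M)⁻¹ = Matrix.of (fun i j => ∑' k, (M ^ k) i j) :=
  Matrix.inv_eq_right_inv (one_sub_mul_neumann hM hE)

end Inv

/-- `Φ(R_max) ≤ R_max` componentwise; in particular
`(a + M^d d + M^s s_max − d)⁺ ≤ s_max` with `s_max = (I−M^s)⁻¹(a + M^d d − d)⁺`. -/
theorem Phi_Rmax_le_Rmax {n : ℕ} (a d : Fin n → ℝ)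
    (ha : ∀ i, 0 ≤ a i) (hd : ∀ i, 0 ≤ d i)
    (Md Ms : Matrix (Fin n) (Fin n) ℝ)
    (hMd : Substoch Md) (hMs : Substoch Ms) (hMsE : Elsinger Ms) :
    Phi a d Md Ms (Rmax a d Md Ms) ≤ Rmax a d Md Ms ∧
    (∀ i, max (a i + Md.mulVec d i + Ms.mulVec (Rmax a d Md Ms).2 i - d i) 0
        ≤ (Rmax a d Md Ms).2 i) := by
  classical
  set B : Matrix (Fin n) (Fin n) ℝ := Matrix.of (fun i j => ∑' k, (Ms ^ k) i j) with hB
  have hBnn : ∀ i j, 0 ≤ B i j := fun i j =>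
    tsum_nonneg fun k => pow_entry_nonneg hMs.1 k i j
  have hinv : (1 - Ms)⁻¹ = B := inv_one_sub_eq hMs hMsE
  set v : Fin n → ℝ := fun i => max (a i + Md.mulVec d i - d i) 0 with hv
  have hvnn : ∀ i, 0 ≤ v i := fun i => le_max_right _ _
  set s : Fin n → ℝ := (Rmax a d Md Ms).2 with hs
  have hsB : s = B.mulVec v := by
    rw [hs, Rmax, hinv]
  have hsnn : ∀ i, 0 ≤ s i := by
    intro i
    rw [hsB, Matrix.mulVec, dotProduct]
    exact Finset.sum_nonneg fun l _ => mul_nonneg (hBnn i l) (hvnn l)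
  have hfix : ∀ i, s i = v i + Ms.mulVec s i := by
    have heq : (1 - Ms).mulVec s = v := by
      rw [hsB, Matrix.mulVec_mulVec, one_sub_mul_neumann hMs hMsE, Matrix.one_mulVec]
    rw [Matrix.sub_mulVec, Matrix.one_mulVec] at heq
    intro i
    have := congrFun heq i
    rw [Pi.sub_apply] at this
    linarith
  have hkey : ∀ i, max (a i + Md.mulVec d i + Ms.mulVec s i - d i) 0 ≤ s i := by
    intro i
    refine max_le ?_ (hsnn i)
    have h1 : a i + Md.mulVec d i - d i ≤ v i := le_max_left _ _
    have := hfix i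
    linarith
  refine ⟨⟨fun i => ?_, fun i => ?_⟩, hkey⟩
  · exact min_le_left _ _
  · exact hkey i
end

section
/- For fixed debt payment vector r̄ ≥ 0, the iteration w^{k+1} = (I − M^s G(w^k))^{-1} w^0 with w^0 = a + M^d r̄ − d and G(w) = diag(w ≥ 0) produces a componentwise non-decreasing sequence of vectors. -/
open Matrix Finset Filter Topology

/-- `G(w) = diag(w ≥ 0)`: the 0-1 diagonal matrix indicating nonnegative entries. -/
noncomputable def Gmat {n : ℕ} (w : Fin n → ℝ) : Matrix (Fin n) (Fin n) ℝ :=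
  Matrix.diagonal fun i => if 0 ≤ w i then 1 else 0

/-- Minimum principle: if `x i = ∑ j, B j i * x j + c i` with `c ≥ 0` and `B`
substochastic with the Elsinger property, then `x ≥ 0`. -/
lemma key_nonneg {n : ℕ} (B : Matrix (Fin n) (Fin n) ℝ) (hB : Substoch B) (hE : Elsinger B)
    (x c : Fin n → ℝ) (hc : ∀ i, 0 ≤ c i)
    (hx : ∀ i, x i = (∑ j, B j i * x j) + c i) : ∀ i, 0 ≤ x i := by
  by_contra h
  push_neg at h
  obtain ⟨i0, hi0⟩ := h
  have hne : (Finset.univ : Finset (Fin n)).Nonempty := ⟨i0, Finset.mem_univ _⟩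
  set m : ℝ := Finset.univ.inf' hne x with hm_def
  have hmle : ∀ i, m ≤ x i := fun i => Finset.inf'_le x (Finset.mem_univ i)
  have hmneg : m < 0 := lt_of_le_of_lt (hmle i0) hi0
  set J : Finset (Fin n) := Finset.univ.filter (fun j => x j = m) with hJ_def
  have hJne : J.Nonempty := by
    obtain ⟨i, _, hi⟩ := Finset.exists_mem_eq_inf' hne x
    exact ⟨i, by simp [hJ_def, hi.symm, hm_def]⟩
  refine hE J hJne (fun j hj => ?_)
  have hxj : x j = m := by simpa [hJ_def] using hj
  set s : ℝ := ∑ i, B i j with hs_def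
  have h1 : s * m ≤ ∑ i, B i j * x i := by
    rw [hs_def, Finset.sum_mul]
    exact Finset.sum_le_sum fun i _ => mul_le_mul_of_nonneg_left (hmle i) (hB.1 i j)
  have h2 : m ≤ s * m := by
    have := mul_le_mul_of_nonpos_right (hB.2 j) hmneg.le
    simpa using this
  have heq : (∑ i, B i j * x i) + c j = m := by rw [← hx j, hxj]
  have hcj : c j = 0 := by
    have : m + c j ≤ m := by
      calc m + c j ≤ s * m + c j := by linarith
        _ ≤ (∑ i, B i j * x i) + c j := by linarith
        _ = m := heq
    linarith [hc j]
  have hsum : (∑ i, B i j * x i) = m := by linarith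
  have hsm : s * m = m := le_antisymm (by linarith) h2
  have hs1 : s = 1 := by
    have := mul_right_cancel₀ hmneg.ne (by rw [hsm, one_mul] : s * m = 1 * m)
    exact this
  have hzero : ∀ i ∈ Finset.univ, B i j * (x i - m) = 0 := by
    rw [← Finset.sum_eq_zero_iff_of_nonneg
      (fun i _ => mul_nonneg (hB.1 i j) (sub_nonneg.2 (hmle i)))]
    have : ∑ i, B i j * (x i - m) = (∑ i, B i j * x i) - s * m := by
      rw [hs_def, Finset.sum_mul, ← Finset.sum_sub_distrib]
      exact Finset.sum_congr rfl fun i _ => by ring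
    rw [this, hsum, hsm, sub_self]
  have hout : ∀ i ∈ Finset.univ, i ∉ J → B i j = 0 := by
    intro i _ hiJ
    have hxi : x i ≠ m := by simpa [hJ_def] using hiJ
    have := hzero i (Finset.mem_univ i)
    rcases mul_eq_zero.1 this with h | h
    · exact h
    · exact absurd (by linarith [sub_eq_zero.1 h] : x i = m) hxi
  calc ∑ i ∈ J, B i j = ∑ i, B i j := Finset.sum_subset (Finset.subset_univ J) hout
    _ = 1 := hs1

/-- Invertibility and entrywise nonnegativity of `(1 - B)⁻¹`. -/
lemma inv_facts {n : ℕ} (B : Matrix (Fin n) (Fin n) ℝ) (hB : Substoch B) (hE : Elsinger B) :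
    IsUnit (1 - B).det ∧ ∀ i j, 0 ≤ (1 - B)⁻¹ i j := by
  have hT : (1 - B)ᵀ = 1 - Bᵀ := by rw [Matrix.transpose_sub, Matrix.transpose_one]
  have hdet : IsUnit (1 - B).det := by
    rw [isUnit_iff_ne_zero, ← Matrix.det_transpose, hT]
    intro hd
    obtain ⟨v, hv0, hv⟩ := (Matrix.exists_mulVec_eq_zero_iff).2 hd
    have hrel : ∀ i, v i = ∑ j, B j i * v j := by
      intro i
      have := congrFun hv i
      rw [Matrix.sub_mulVec, Matrix.one_mulVec] at this
      have h2 : v i - Bᵀ.mulVec v i = 0 := this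
      have : v i = Bᵀ.mulVec v i := by linarith
      simpa [Matrix.mulVec, dotProduct, Matrix.transpose_apply] using this
    have hpos : ∀ i, 0 ≤ v i :=
      key_nonneg B hB hE v 0 (fun i => le_refl 0) (fun i => by simpa using hrel i)
    have hneg : ∀ i, 0 ≤ -v i := by
      refine key_nonneg B hB hE (-v) 0 (fun i => le_refl 0) (fun i => ?_)
      simp only [Pi.neg_apply, Pi.zero_apply, add_zero]
      rw [hrel i, ← Finset.sum_neg_distrib]
      exact Finset.sum_congr rfl fun j _ => by ring
    refine hv0 (funext fun i => ?_)
    have h1 := hpos i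
    have h2 := hneg i
    have : v i = 0 := by linarith
    simpa using this
  refine ⟨hdet, fun i j => ?_⟩
  have hdetT : IsUnit (1 - Bᵀ).det := by rwa [← hT, Matrix.det_transpose]
  have hmul : (1 - Bᵀ) * (1 - Bᵀ)⁻¹ = 1 := Matrix.mul_nonsing_inv _ hdetT
  set y : Fin n → ℝ := fun k => (1 - Bᵀ)⁻¹ k i with hy_def
  have hrel : ∀ k, y k = (∑ j, B j k * y j) + (if k = i then (1:ℝ) else 0) := by
    intro k
    have := congrFun (congrFun hmul k) i
    rw [Matrix.mul_apply] at this
    have h1 : ∑ j, (1 - Bᵀ) k j * y j = (if k = i then (1:ℝ) else 0) := by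
      simpa [Matrix.one_apply] using this
    have h2 : ∑ j, (1 - Bᵀ) k j * y j = y k - ∑ j, B j k * y j := by
      simp only [Matrix.sub_apply, Matrix.one_apply, Matrix.transpose_apply, sub_mul]
      rw [Finset.sum_sub_distrib]
      congr 1
      simp [Finset.sum_ite_eq', hy_def]
    rw [h2] at h1
    linarith
  have := key_nonneg B hB hE y (fun k => if k = i then (1:ℝ) else 0)
    (fun k => by by_cases h : k = i <;> simp [h]) hrel j
  have hyj : y j = (1 - B)⁻¹ i j := by
    rw [hy_def]
    simp only
    rw [← hT, ← Matrix.transpose_nonsing_inv, Matrix.transpose_apply]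
  rwa [hyj] at this

lemma gmat_substoch {n : ℕ} (Ms : Matrix (Fin n) (Fin n) ℝ) (hMs : Substoch Ms)
    (hMsE : Elsinger Ms) (v : Fin n → ℝ) :
    Substoch (Ms * Gmat v) ∧ Elsinger (Ms * Gmat v) := by
  have happ : ∀ i j, (Ms * Gmat v) i j = Ms i j * (if 0 ≤ v j then (1:ℝ) else 0) := by
    intro i j; rw [Gmat, Matrix.mul_diagonal]
  constructor
  · constructor
    · intro i j; rw [happ]; exact mul_nonneg (hMs.1 i j) (by split <;> norm_num)
    · intro j
      simp only [happ]
      split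
      · simpa using hMs.2 j
      · simp
  · intro J hJne hall
    refine hMsE J hJne (fun j hj => ?_)
    have := hall j hj
    simp only [happ] at this
    by_cases hv : 0 ≤ v j
    · simp only [if_pos hv, mul_one] at this; exact this
    · simp [if_neg hv] at this

/-- For fixed debt payments `r̄ ≥ 0`, the iteration
`w^{k+1} = (I − M^s G(w^k))⁻¹ w^0`, `w^0 = a + M^d r̄ − d`, is componentwise
non-decreasing. -/
theorem equity_iteration_monotone {n : ℕ} (a d rbar : Fin n → ℝ)
    (ha : ∀ i, 0 ≤ a i) (hd : ∀ i, 0 ≤ d i) (hrbar : ∀ i, 0 ≤ rbar i)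
    (Md Ms : Matrix (Fin n) (Fin n) ℝ)
    (hMdnn : ∀ i j, 0 ≤ Md i j)
    (hMs : Substoch Ms) (hMsE : Elsinger Ms)
    (w : ℕ → Fin n → ℝ)
    (hw0 : w 0 = fun i => a i + Md.mulVec rbar i - d i)
    (hwk : ∀ k, w (k + 1) = (1 - Ms * Gmat (w k))⁻¹.mulVec (w 0)) :
    Monotone w := by
  -- facts about each iteration matrix
  have hfacts : ∀ k, IsUnit (1 - Ms * Gmat (w k)).det ∧
      ∀ i j, 0 ≤ (1 - Ms * Gmat (w k))⁻¹ i j := by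
    intro k
    obtain ⟨h1, h2⟩ := gmat_substoch Ms hMs hMsE (w k)
    exact inv_facts _ h1 h2
  -- the defining relation
  have hrel : ∀ k, (1 - Ms * Gmat (w k)).mulVec (w (k + 1)) = w 0 := by
    intro k
    rw [hwk k, Matrix.mulVec_mulVec, Matrix.mul_nonsing_inv _ (hfacts k).1,
      Matrix.one_mulVec]
  -- nonneg rhs implies nonneg solution
  have hsolve : ∀ k (δ c : Fin n → ℝ), (1 - Ms * Gmat (w k)).mulVec δ = c →
      (∀ j, 0 ≤ c j) → ∀ i, 0 ≤ δ i := by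
    intro k δ c hδ hc i
    have : δ = (1 - Ms * Gmat (w k))⁻¹.mulVec c := by
      rw [← hδ, Matrix.mulVec_mulVec, Matrix.nonsing_inv_mul _ (hfacts k).1,
        Matrix.one_mulVec]
    rw [this]
    simp only [Matrix.mulVec, dotProduct]
    exact Finset.sum_nonneg fun j _ => mul_nonneg ((hfacts k).2 i j) (hc j)
  -- Gmat action on vectors
  have hGvec : ∀ (v u : Fin n → ℝ), (Gmat v).mulVec u =
      fun j => (if 0 ≤ v j then (1:ℝ) else 0) * u j := by
    intro v u
    funext j
    simp [Gmat, Matrix.mulVec_diagonal]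
  refine monotone_nat_of_le_succ fun k => ?_
  induction k with
  | zero =>
    intro i
    have hc : ∀ j, 0 ≤ (Ms * Gmat (w 0)).mulVec (w 0) j := by
      intro j
      rw [← Matrix.mulVec_mulVec, hGvec]
      simp only [Matrix.mulVec, dotProduct]
      refine Finset.sum_nonneg fun l _ => mul_nonneg (hMs.1 j l) ?_
      by_cases h : 0 ≤ w 0 l <;> simp [h]
    have hδ : (1 - Ms * Gmat (w 0)).mulVec (w 1 - w 0) = (Ms * Gmat (w 0)).mulVec (w 0) := by
      have h0 : (1 - Ms * Gmat (w 0)).mulVec (w 0) = w 0 - (Ms * Gmat (w 0)).mulVec (w 0) := by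
        rw [Matrix.sub_mulVec, Matrix.one_mulVec]
      rw [Matrix.mulVec_sub, hrel 0, h0]
      abel
    have := hsolve 0 _ _ hδ hc i
    simpa [sub_nonneg] using this
  | succ k ih =>
    intro i
    -- c = Ms (G(w(k+1)) - G(w k)) w(k+1)
    set c : Fin n → ℝ :=
      (Ms * Gmat (w (k+1))).mulVec (w (k+1)) - (Ms * Gmat (w k)).mulVec (w (k+1)) with hc_def
    have hc : ∀ j, 0 ≤ c j := by
      intro j
      rw [hc_def]
      simp only [Pi.sub_apply]
      rw [← Matrix.mulVec_mulVec, ← Matrix.mulVec_mulVec, hGvec, hGvec, sub_nonneg]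
      simp only [Matrix.mulVec, dotProduct]
      refine Finset.sum_le_sum fun l _ => ?_
      refine mul_le_mul_of_nonneg_left ?_ (hMs.1 j l)
      by_cases h1 : 0 ≤ w k l
      · have h2 : 0 ≤ w (k+1) l := le_trans h1 (ih l)
        simp [h1, h2]
      · simp only [if_neg h1, zero_mul]
        by_cases h2 : 0 ≤ w (k+1) l <;> simp [h2]
    have hδ : (1 - Ms * Gmat (w (k+1))).mulVec (w (k+2) - w (k+1)) = c := by
      rw [Matrix.mulVec_sub, hrel (k+1), ← hrel k, hc_def,
        Matrix.sub_mulVec, Matrix.sub_mulVec, Matrix.one_mulVec]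
      abel
    have := hsolve (k+1) _ _ hδ hc i
    simpa [sub_nonneg] using this
end

section
/- In the iteration w^{k+1} = (I − M^s G(w^k))^{-1} w^0, if at some step l the sign-pattern sets P(w^l) = {i : w^l_i ≥ 0} and P(w^{l+1}) coincide, then all subsequent iterates equal w^{l+1}, and (w^{l+1})^+ is a fixed point of s ↦ (a + M^d r̄ + M^s s − d)^+. -/
open Matrix Finset Filter Topology

lemma key_unit {n : ℕ} (Ms : Matrix (Fin n) (Fin n) ℝ) (hMs : Substoch Ms)
    (hE : Elsinger Ms) (g : Fin n → ℝ) (hg : ∀ j, g j = 0 ∨ g j = 1) :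
    IsUnit (1 - Ms * Matrix.diagonal g).det := by
  by_contra hdet
  have h0 : (1 - Ms * Matrix.diagonal g).det = 0 := by
    rcases isUnit_iff_ne_zero.not.mp hdet with h
    push_neg at h; exact h
  obtain ⟨v, hv, hMv⟩ := (Matrix.exists_mulVec_eq_zero_iff).mpr h0
  -- M i j = Ms i j * g j
  set M : Matrix (Fin n) (Fin n) ℝ := Ms * Matrix.diagonal g with hM
  have hMentry : ∀ i j, M i j = Ms i j * g j := by
    intro i j; simp [hM, Matrix.mul_diagonal]
  have hgnn : ∀ j, 0 ≤ g j := by intro j; rcases hg j with h | h <;> simp [h]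
  have hgle : ∀ j, g j ≤ 1 := by intro j; rcases hg j with h | h <;> simp [h]
  have hMnn : ∀ i j, 0 ≤ M i j := fun i j => by
    rw [hMentry]; exact mul_nonneg (hMs.1 i j) (hgnn j)
  have hMcol : ∀ j, ∑ i, M i j ≤ 1 := by
    intro j
    simp only [hMentry, ← Finset.sum_mul]
    calc (∑ i, Ms i j) * g j ≤ 1 * 1 :=
          mul_le_mul (hMs.2 j) (hgle j) (hgnn j) zero_le_one
      _ = 1 := by ring
  -- v = M v
  have hfix : ∀ i, v i = ∑ j, M i j * v j := by
    intro i
    have := congrFun hMv i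
    simp only [Matrix.sub_mulVec, Matrix.one_mulVec, Pi.sub_apply, Pi.zero_apply,
      sub_eq_zero] at this
    simpa [Matrix.mulVec, dotProduct] using this
  set y : Fin n → ℝ := fun i => |v i| with hy
  have hynn : ∀ i, 0 ≤ y i := fun i => abs_nonneg _
  have hyle : ∀ i, y i ≤ ∑ j, M i j * y j := by
    intro i
    calc y i = |∑ j, M i j * v j| := by rw [hy]; simp [← hfix i]
      _ ≤ ∑ j, |M i j * v j| := Finset.abs_sum_le_sum_abs _ _
      _ = ∑ j, M i j * y j := by
          refine Finset.sum_congr rfl fun j _ => ?_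
          rw [abs_mul, abs_of_nonneg (hMnn i j)]
  have hswap : ∑ i, ∑ j, M i j * y j = ∑ j, (∑ i, M i j) * y j := by
    rw [Finset.sum_comm]
    exact Finset.sum_congr rfl fun j _ => by rw [Finset.sum_mul]
  have hsum2 : ∑ j, (∑ i, M i j) * y j ≤ ∑ j, y j := by
    refine Finset.sum_le_sum fun j _ => ?_
    calc (∑ i, M i j) * y j ≤ 1 * y j :=
          mul_le_mul_of_nonneg_right (hMcol j) (hynn j)
      _ = y j := one_mul _
  have hsum1 : ∑ i, y i ≤ ∑ i, ∑ j, M i j * y j := Finset.sum_le_sum fun i _ => hyle i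
  have hsumeq : ∑ i, y i = ∑ i, ∑ j, M i j * y j :=
    le_antisymm hsum1 (by rw [hswap]; exact hsum2)
  -- pointwise equality y i = (My) i
  have hyeq : ∀ i, y i = ∑ j, M i j * y j := by
    have hz : ∀ i ∈ Finset.univ, (∑ j, M i j * y j) - y i = 0 := by
      refine (Finset.sum_eq_zero_iff_of_nonneg fun i _ => sub_nonneg.mpr (hyle i)).mp ?_
      simp [Finset.sum_sub_distrib, ← hsumeq]
    intro i
    have := hz i (Finset.mem_univ i)
    linarith
  -- colsum = 1 on support
  have hcol1 : ∀ j, y j ≠ 0 → ∑ i, M i j = 1 := by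
    have hz : ∀ j ∈ Finset.univ, (1 - ∑ i, M i j) * y j = 0 := by
      refine (Finset.sum_eq_zero_iff_of_nonneg fun j _ =>
        mul_nonneg (sub_nonneg.mpr (hMcol j)) (hynn j)).mp ?_
      have : ∑ j, (1 - ∑ i, M i j) * y j = ∑ j, y j - ∑ j, (∑ i, M i j) * y j := by
        rw [← Finset.sum_sub_distrib]
        exact Finset.sum_congr rfl fun j _ => by ring
      rw [this, ← hswap, ← hsumeq]; ring
    intro j hj
    have := hz j (Finset.mem_univ j)
    rcases mul_eq_zero.mp this with h | h
    · linarith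
    · exact absurd h hj
  -- support J
  set J : Finset (Fin n) := Finset.univ.filter (fun j => y j ≠ 0) with hJ
  have hJne : J.Nonempty := by
    rcases Function.ne_iff.mp hv with ⟨i, hi⟩
    exact ⟨i, by simp only [hJ, Finset.mem_filter, Finset.mem_univ, true_and, hy]; simpa using hi⟩
  -- M i j = 0 for i ∉ J, j ∈ J
  have hMzero : ∀ i, y i = 0 → ∀ j, y j ≠ 0 → M i j = 0 := by
    intro i hi j hj
    have h0 : ∑ j, M i j * y j = 0 := by rw [← hyeq i, hi]
    have hterm : ∀ j ∈ Finset.univ, M i j * y j = 0 :=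
      (Finset.sum_eq_zero_iff_of_nonneg fun j _ =>
        mul_nonneg (hMnn i j) (hynn j)).mp h0
    have := hterm j (Finset.mem_univ j)
    rcases mul_eq_zero.mp this with h | h
    · -- M i j = Ms i j * g j = 0 gives Ms i j * g j = 0; need Ms i j = 0? No, M i j = 0 suffices
      exact h
    · exact absurd h hj
  -- contradiction with Elsinger
  refine hE J hJne fun j hj => ?_
  have hjy : y j ≠ 0 := (Finset.mem_filter.mp hj).2
  have hg1 : g j = 1 := by
    rcases hg j with h | h
    · exfalso
      have := hcol1 j hjy
      simp only [hMentry, h, mul_zero, Finset.sum_const_zero] at this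
      norm_num at this
    · exact h
  have hsplit : ∑ i, M i j = ∑ i ∈ J, M i j := by
    rw [← Finset.sum_filter_add_sum_filter_not Finset.univ (fun i => y i ≠ 0) (fun i => M i j)]
    have : ∑ i ∈ Finset.univ.filter (fun i => ¬ y i ≠ 0), M i j = 0 := by
      refine Finset.sum_eq_zero fun i hi => ?_
      have : y i = 0 := not_not.mp (Finset.mem_filter.mp hi).2
      exact hMzero i this j hjy
    rw [this, add_zero]
  have : ∑ i ∈ J, M i j = 1 := by rw [← hsplit]; exact hcol1 j hjy
  calc ∑ i ∈ J, Ms i j = ∑ i ∈ J, M i j := by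
        refine Finset.sum_congr rfl fun i _ => ?_
        rw [hMentry, hg1, mul_one]
    _ = 1 := this

/-- If the sign-pattern sets `P(w^l)` and `P(w^{l+1})` coincide,
then the iteration is constant from step `l+1` on, and `(w^{l+1})⁺` is a fixed
point of the equity map `s ↦ (a + M^d r̄ + M^s s − d)⁺`. -/
theorem equity_iteration_stabilizes {n : ℕ} (a d rbar : Fin n → ℝ)
    (ha : ∀ i, 0 ≤ a i) (hd : ∀ i, 0 ≤ d i) (hrbar : ∀ i, 0 ≤ rbar i)
    (Md Ms : Matrix (Fin n) (Fin n) ℝ)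
    (hMdnn : ∀ i j, 0 ≤ Md i j)
    (hMs : Substoch Ms) (hMsE : Elsinger Ms)
    (w : ℕ → Fin n → ℝ)
    (hw0 : w 0 = fun i => a i + Md.mulVec rbar i - d i)
    (hwk : ∀ k, w (k + 1) = (1 - Ms * Gmat (w k))⁻¹.mulVec (w 0))
    (l : ℕ)
    (hP : {i : Fin n | 0 ≤ w l i} = {i : Fin n | 0 ≤ w (l + 1) i}) :
    (∀ k, l + 1 ≤ k → w k = w (l + 1)) ∧
    ((fun i => max (a i + Md.mulVec rbar i
        + Ms.mulVec (fun j => max (w (l + 1) j) 0) i - d i) 0)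
      = fun j => max (w (l + 1) j) 0) := by
  have hPiff : ∀ i, (0 ≤ w l i ↔ 0 ≤ w (l + 1) i) := fun i => by
    have := Set.ext_iff.mp hP i; simpa using this
  have hGeq : Gmat (w (l + 1)) = Gmat (w l) := by
    unfold Gmat
    have hfun : (fun i => if 0 ≤ w (l + 1) i then (1 : ℝ) else 0)
        = fun i => if 0 ≤ w l i then 1 else 0 := by
      funext i
      by_cases h : 0 ≤ w l i
      · simp [h, (hPiff i).mp h]
      · have h' : ¬ 0 ≤ w (l + 1) i := fun hh => h ((hPiff i).mpr hh)
        simp [h, h']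
    rw [hfun]
  -- part 1
  have part1 : ∀ k, l + 1 ≤ k → w k = w (l + 1) := by
    intro k hk
    induction k with
    | zero => omega
    | succ m ih =>
      rcases Nat.lt_or_ge (m + 1) (l + 2) with h | h
      · have : m + 1 = l + 1 := by omega
        rw [this]
      · have hm : l + 1 ≤ m := by omega
        have hwm := ih hm
        rw [hwk m, hwm, hGeq, ← hwk l]
  -- invertibility
  have hdet : IsUnit (1 - Ms * Gmat (w l)).det := by
    have := key_unit Ms hMs hMsE (fun i => if 0 ≤ w l i then 1 else 0)
      (fun j => by by_cases h : 0 ≤ w l j <;> simp [h])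
    simpa [Gmat] using this
  have heq : (1 - Ms * Gmat (w l)).mulVec (w (l + 1)) = w 0 := by
    rw [hwk l, Matrix.mulVec_mulVec, Matrix.mul_nonsing_inv _ hdet, Matrix.one_mulVec]
  -- unfold heq componentwise: w(l+1) i = w0 i + Ms.mulVec ((w(l+1))⁺) i
  have hGv : (Gmat (w l)).mulVec (w (l + 1)) = fun j => max (w (l + 1) j) 0 := by
    funext j
    unfold Gmat
    rw [Matrix.mulVec_diagonal]
    by_cases h : 0 ≤ w l j
    · have h' := (hPiff j).mp h
      simp [h, max_eq_left h']
    · have h' : ¬ 0 ≤ w (l + 1) j := fun hh => h ((hPiff j).mpr hh)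
      have : w (l + 1) j ≤ 0 := le_of_not_ge h'
      simp [h, max_eq_right this]
  have hfix : ∀ i, w (l + 1) i = w 0 i + Ms.mulVec (fun j => max (w (l + 1) j) 0) i := by
    intro i
    have := congrFun heq i
    rw [Matrix.sub_mulVec, Matrix.one_mulVec] at this
    have h2 : (Ms * Gmat (w l)).mulVec (w (l + 1)) i
        = Ms.mulVec (fun j => max (w (l + 1) j) 0) i := by
      rw [← Matrix.mulVec_mulVec, hGv]
    simp only [Pi.sub_apply] at this
    rw [h2] at this
    linarith
  refine ⟨part1, ?_⟩
  funext i
  have hw0i : w 0 i = a i + Md.mulVec rbar i - d i := by rw [hw0]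
  have : a i + Md.mulVec rbar i + Ms.mulVec (fun j => max (w (l + 1) j) 0) i - d i
      = w (l + 1) i := by
    rw [hfix i, hw0i]; ring
  rw [this]
end

section
/- The iteration w^{k+1} = (I − M^s G(w^k))^{-1} w^0 reaches its limit after at most n − d₀ steps, where d₀ = |{i : w^0_i ≥ 0}|; i.e., the sets P(w^k) = {i : w^k_i ≥ 0} are non-decreasing in k and stabilize after at most n − d₀ iterations. -/
open Matrix Finset Filter Topology

namespace EquityAux

variable {n : ℕ}

lemma pow_entry_nonneg {B : Matrix (Fin n) (Fin n) ℝ} (hB : ∀ i j, 0 ≤ B i j) :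
    ∀ m i j, 0 ≤ (B ^ m) i j := by
  intro m
  induction m with
  | zero =>
    intro i j
    rw [pow_zero, Matrix.one_apply]
    split <;> norm_num
  | succ m ih =>
    intro i j
    rw [pow_succ, Matrix.mul_apply]
    exact Finset.sum_nonneg fun l _ => mul_nonneg (ih i l) (hB l j)

lemma colsum_add (B : Matrix (Fin n) (Fin n) ℝ) (a b : ℕ) (j : Fin n) :
    ∑ i, (B ^ (a + b)) i j = ∑ l, (∑ i, (B ^ a) i l) * (B ^ b) l j := by
  rw [pow_add]
  simp only [Matrix.mul_apply]
  rw [Finset.sum_comm]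
  simp [Finset.sum_mul]

lemma colsum_zero (B : Matrix (Fin n) (Fin n) ℝ) (j : Fin n) :
    ∑ i, (B ^ 0) i j = 1 := by
  simp [Matrix.one_apply]

lemma colsum_le_one {B : Matrix (Fin n) (Fin n) ℝ} (hB : ∀ i j, 0 ≤ B i j)
    (h1 : ∀ j, ∑ i, B i j ≤ 1) : ∀ m j, ∑ i, (B ^ m) i j ≤ 1 := by
  intro m
  induction m with
  | zero => intro j; rw [colsum_zero]
  | succ m ih =>
    intro j
    rw [colsum_add B m 1]
    calc ∑ l, (∑ i, (B ^ m) i l) * (B ^ 1) l j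
        ≤ ∑ l, 1 * (B ^ 1) l j := by
          refine Finset.sum_le_sum fun l _ => ?_
          exact mul_le_mul_of_nonneg_right (ih l) (by rw [pow_one]; exact hB l j)
      _ = ∑ l, B l j := by simp
      _ ≤ 1 := h1 j

lemma colsum_anti {B : Matrix (Fin n) (Fin n) ℝ} (hB : ∀ i j, 0 ≤ B i j)
    (h1 : ∀ j, ∑ i, B i j ≤ 1) :
    ∀ m j, ∑ i, (B ^ (m + 1)) i j ≤ ∑ i, (B ^ m) i j := by
  intro m
  induction m with
  | zero => intro j; rw [colsum_zero]; exact colsum_le_one hB h1 1 j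
  | succ m ih =>
    intro j
    rw [colsum_add B (m + 1) 1, colsum_add B m 1]
    refine Finset.sum_le_sum fun l _ => ?_
    exact mul_le_mul_of_nonneg_right (ih l) (by rw [pow_one]; exact hB l j)

lemma colsum_pow_lt_one {B : Matrix (Fin n) (Fin n) ℝ} (hB : ∀ i j, 0 ≤ B i j)
    (h1 : ∀ j, ∑ i, B i j ≤ 1) (hE : Elsinger B) :
    ∀ j, ∑ i, (B ^ n) i j < 1 := by
  classical
  set J : ℕ → Finset (Fin n) := fun m => univ.filter (fun j => ∑ i, (B ^ m) i j = 1) with hJ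
  have hmem : ∀ m j, j ∈ J m ↔ ∑ i, (B ^ m) i j = 1 := by
    intro m j; simp [hJ]
  -- J is antitone step by step
  have hsub : ∀ m, J (m + 1) ⊆ J m := by
    intro m j hj
    rw [hmem] at hj ⊢
    have h2 := colsum_anti hB h1 m j
    have h3 := colsum_le_one hB h1 m j
    linarith
  -- key: for j ∈ J (m+1), the column sum over J m equals 1
  have hkey : ∀ m j, j ∈ J (m + 1) → ∑ i ∈ J m, B i j = 1 := by
    intro m j hj
    rw [hmem] at hj
    rw [colsum_add B m 1] at hj
    simp only [pow_one] at hj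
    have hle : ∀ l ∈ univ, (∑ i, (B ^ m) i l) * B l j ≤ B l j := by
      intro l _
      calc (∑ i, (B ^ m) i l) * B l j ≤ 1 * B l j :=
            mul_le_mul_of_nonneg_right (colsum_le_one hB h1 m l) (hB l j)
        _ = B l j := one_mul _
    have hsum1 : ∑ l, B l j = 1 := by
      have := Finset.sum_le_sum hle
      have := h1 j
      linarith
    have heach : ∀ l ∈ univ, (∑ i, (B ^ m) i l) * B l j = B l j := by
      rw [← Finset.sum_eq_sum_iff_of_le hle]
      rw [hj, hsum1]
    have hzero : ∀ l, l ∉ J m → B l j = 0 := by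
      intro l hl
      rw [hmem] at hl
      have h4 := heach l (mem_univ l)
      by_contra hne
      exact hl (mul_right_cancel₀ hne (h4.trans (one_mul _).symm))
    rw [← hsum1]
    refine Finset.sum_subset (Finset.subset_univ _) ?_
    intro l _ hl
    exact hzero l hl
  -- cardinality bound
  have hcard : ∀ m, (J m).Nonempty → (J m).card + m ≤ n := by
    intro m
    induction m with
    | zero =>
      intro _
      simpa using Finset.card_le_univ (J 0)
    | succ m ih =>
      intro hne
      have hJm : (J m).Nonempty := hne.mono (hsub m)
      have hnee : J (m + 1) ≠ J m := by
        intro heq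
        exact hE (J m) hJm (fun j hj => hkey m j (heq ▸ hj))
      have hss : J (m + 1) ⊂ J m := lt_of_le_of_ne (hsub m) hnee
      have := Finset.card_lt_card hss
      have := ih hJm
      omega
  intro j
  rcases lt_or_eq_of_le (colsum_le_one hB h1 n j) with h | h
  · exact h
  · exfalso
    have hj : j ∈ J n := by rw [hmem]; exact h
    have := hcard n ⟨j, hj⟩
    have : (J n).card = 0 := by omega
    rw [Finset.card_eq_zero] at this
    rw [this] at hj
    exact absurd hj (Finset.notMem_empty j)

lemma isUnit_one_sub_det {B : Matrix (Fin n) (Fin n) ℝ} (hB : ∀ i j, 0 ≤ B i j)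
    (h1 : ∀ j, ∑ i, B i j ≤ 1) (hE : Elsinger B) : IsUnit (1 - B).det := by
  rcases Nat.eq_zero_or_pos n with hn | hn
  · subst hn
    have : (1 - B) = 1 := Subsingleton.elim _ _
    rw [this, Matrix.det_one]
    exact isUnit_one
  rw [isUnit_iff_ne_zero]
  intro hdet
  obtain ⟨v, hvne, hveq⟩ := Matrix.exists_vecMul_eq_zero_iff.mpr hdet
  set u : Fin n → ℝ := fun i => |v i| with hu
  have hvB : ∀ j, v j = ∑ i, v i * B i j := by
    intro j
    have := congrFun hveq j
    rw [Matrix.vecMul_sub, Matrix.vecMul_one] at this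
    have h2 : (v - v ᵥ* B) j = 0 := this
    simp only [Pi.sub_apply, Matrix.vecMul, dotProduct] at h2
    linarith
  have hstep : ∀ j, u j ≤ ∑ i, u i * B i j := by
    intro j
    calc u j = |∑ i, v i * B i j| := by rw [hu]; simp [← hvB j]
      _ ≤ ∑ i, |v i * B i j| := Finset.abs_sum_le_sum_abs _ _
      _ = ∑ i, u i * B i j := by
          refine Finset.sum_congr rfl fun i _ => ?_
          rw [abs_mul, abs_of_nonneg (hB i j)]
  have hiter : ∀ m j, u j ≤ ∑ i, u i * (B ^ m) i j ∨ m = 0 := by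
    intro m
    induction m with
    | zero => intro j; right; rfl
    | succ m ih =>
      intro j
      left
      have key : ∑ i, u i * (B ^ (m + 1)) i j = ∑ l, (∑ i, u i * (B ^ m) i l) * B l j := by
        rw [pow_succ]
        simp only [Matrix.mul_apply, Finset.mul_sum, Finset.sum_mul]
        rw [Finset.sum_comm]
        refine Finset.sum_congr rfl fun l _ => Finset.sum_congr rfl fun i _ => by ring
      rw [key]
      calc u j ≤ ∑ l, u l * B l j := hstep j
        _ ≤ ∑ l, (∑ i, u i * (B ^ m) i l) * B l j := by
            refine Finset.sum_le_sum fun l _ => ?_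
            rcases ih l with h | h
            · exact mul_le_mul_of_nonneg_right h (hB l j)
            · subst h
              simp [pow_zero, Matrix.one_apply, mul_ite]
      -- in zero case, sum = u l exactly
  have hne : (univ : Finset (Fin n)).Nonempty := ⟨⟨0, hn⟩, mem_univ _⟩
  obtain ⟨j0, _, hj0⟩ := Finset.exists_max_image univ u hne
  have hupos : 0 < u j0 := by
    have : ∃ i, v i ≠ 0 := by
      by_contra h
      push_neg at h
      exact hvne (funext h)
    obtain ⟨i, hi⟩ := this
    have : 0 < u i := abs_pos.mpr hi
    exact lt_of_lt_of_le this (hj0 i (mem_univ i))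
  have hit : u j0 ≤ ∑ i, u i * (B ^ n) i j0 := by
    rcases hiter n j0 with h | h
    · exact h
    · omega
  have hlt : ∑ i, u i * (B ^ n) i j0 < u j0 := by
    calc ∑ i, u i * (B ^ n) i j0 ≤ ∑ i, u j0 * (B ^ n) i j0 := by
          refine Finset.sum_le_sum fun i _ => ?_
          exact mul_le_mul_of_nonneg_right (hj0 i (mem_univ i)) (pow_entry_nonneg hB n i j0)
      _ = u j0 * ∑ i, (B ^ n) i j0 := by rw [Finset.mul_sum]
      _ < u j0 * 1 := by
          exact mul_lt_mul_of_pos_left (colsum_pow_lt_one hB h1 hE j0) hupos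
      _ = u j0 := mul_one _
  linarith

lemma inv_decomp {B : Matrix (Fin n) (Fin n) ℝ} (hdet : IsUnit (1 - B).det) (K : ℕ) :
    (1 - B)⁻¹ = (∑ k ∈ Finset.range K, B ^ k) + (1 - B)⁻¹ * B ^ K := by
  have hgeom : (1 - B) * (∑ k ∈ Finset.range K, B ^ k) = 1 - B ^ K := by
    have := mul_geom_sum B K
    calc (1 - B) * (∑ k ∈ Finset.range K, B ^ k)
        = -((B - 1) * ∑ k ∈ Finset.range K, B ^ k) := by
          rw [← neg_sub B 1, neg_mul]
      _ = -(B ^ K - 1) := by rw [this]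
      _ = 1 - B ^ K := by rw [neg_sub]
  have h2 : (1 - B)⁻¹ * ((1 - B) * (∑ k ∈ Finset.range K, B ^ k)) =
      (1 - B)⁻¹ * (1 - B ^ K) := by rw [hgeom]
  rw [← mul_assoc, Matrix.nonsing_inv_mul _ hdet, one_mul] at h2
  rw [h2, ← mul_add, sub_add_cancel, mul_one]

lemma inv_one_sub_nonneg {B : Matrix (Fin n) (Fin n) ℝ} (hB : ∀ i j, 0 ≤ B i j)
    (h1 : ∀ j, ∑ i, B i j ≤ 1) (hE : Elsinger B) :
    ∀ i j, 0 ≤ (1 - B)⁻¹ i j := by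
  rcases Nat.eq_zero_or_pos n with hn | hn
  · subst hn; intro i; exact i.elim0
  have hdet := isUnit_one_sub_det hB h1 hE
  have hne : (univ : Finset (Fin n)).Nonempty := ⟨⟨0, hn⟩, mem_univ _⟩
  set c : ℝ := univ.sup' hne (fun j => ∑ i, (B ^ n) i j) with hc
  have hclt : c < 1 := by
    rw [hc, Finset.sup'_lt_iff]
    intro j _
    exact colsum_pow_lt_one hB h1 hE j
  have hc0 : 0 ≤ c := by
    refine le_trans ?_ (Finset.le_sup' (fun j => ∑ i, (B ^ n) i j) (mem_univ ⟨0, hn⟩))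
    exact Finset.sum_nonneg fun i _ => pow_entry_nonneg hB n i _
  have hpow : ∀ m j, ∑ i, (B ^ (n * m)) i j ≤ c ^ m := by
    intro m
    induction m with
    | zero => intro j; rw [Nat.mul_zero, colsum_zero, pow_zero]
    | succ m ih =>
      intro j
      have : n * (m + 1) = n * m + n := by ring
      rw [this, colsum_add]
      calc ∑ l, (∑ i, (B ^ (n * m)) i l) * (B ^ n) l j
          ≤ ∑ l, c ^ m * (B ^ n) l j := by
            refine Finset.sum_le_sum fun l _ => ?_
            exact mul_le_mul_of_nonneg_right (ih l) (pow_entry_nonneg hB n l j)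
        _ = c ^ m * ∑ l, (B ^ n) l j := by rw [Finset.mul_sum]
        _ ≤ c ^ m * c := by
            refine mul_le_mul_of_nonneg_left ?_ (pow_nonneg hc0 m)
            exact Finset.le_sup' (fun j => ∑ i, (B ^ n) i j) (mem_univ j)
        _ = c ^ (m + 1) := by rw [pow_succ]
  have hentry : ∀ m l j, (B ^ (n * m)) l j ≤ c ^ m := by
    intro m l j
    refine le_trans ?_ (hpow m j)
    exact Finset.single_le_sum (fun i _ => pow_entry_nonneg hB (n * m) i j) (mem_univ l)
  intro i j
  set N : Matrix (Fin n) (Fin n) ℝ := (1 - B)⁻¹ with hN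
  set C : ℝ := ∑ l, |N i l| with hC
  have hC0 : 0 ≤ C := Finset.sum_nonneg fun l _ => abs_nonneg _
  have hbound : ∀ m : ℕ, -C * c ^ m ≤ N i j := by
    intro m
    have hdec := inv_decomp hdet (n * m)
    have heq : N i j = (∑ k ∈ Finset.range (n * m), (B ^ k) i j) +
        ∑ l, N i l * (B ^ (n * m)) l j := by
      conv_lhs => rw [hN, hdec]
      simp [Matrix.add_apply, Matrix.mul_apply, Matrix.sum_apply, hN]
    rw [heq]
    have h3 : ∑ l, N i l * (B ^ (n * m)) l j ≥ ∑ l, -|N i l| * c ^ m := by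
      refine Finset.sum_le_sum fun l _ => ?_
      have e0 : 0 ≤ (B ^ (n * m)) l j := pow_entry_nonneg hB (n * m) l j
      have e1 : (B ^ (n * m)) l j ≤ c ^ m := hentry m l j
      have e2 : -|N i l| ≤ N i l := neg_abs_le _
      nlinarith [abs_nonneg (N i l)]
    have h4 : ∑ l, -|N i l| * c ^ m = -C * c ^ m := by
      rw [hC, ← Finset.sum_mul]
      simp [Finset.sum_neg_distrib]
    have h5 : 0 ≤ ∑ k ∈ Finset.range (n * m), (B ^ k) i j :=
      Finset.sum_nonneg fun k _ => pow_entry_nonneg hB k i j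
    linarith [h3, h4.symm.le]
  have hlim : Tendsto (fun m : ℕ => -C * c ^ m) atTop (nhds 0) := by
    have := (tendsto_pow_atTop_nhds_zero_of_lt_one hc0 hclt).const_mul (-C)
    simpa using this
  exact le_of_tendsto hlim (Filter.Eventually.of_forall hbound)

end EquityAux

/-- The sign-pattern sets `P(w^k) = {i : w^k_i ≥ 0}` are
non-decreasing in `k` and stabilize after at most `n − d₀` iterations, where
`d₀` is the number of nonnegative entries of `w^0`. -/
theorem equity_iteration_finite {n : ℕ} (a d rbar : Fin n → ℝ)
    (ha : ∀ i, 0 ≤ a i) (hd : ∀ i, 0 ≤ d i) (hrbar : ∀ i, 0 ≤ rbar i)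
    (Md Ms : Matrix (Fin n) (Fin n) ℝ)
    (hMdnn : ∀ i j, 0 ≤ Md i j)
    (hMs : Substoch Ms) (hMsE : Elsinger Ms)
    (w : ℕ → Fin n → ℝ)
    (hw0 : w 0 = fun i => a i + Md.mulVec rbar i - d i)
    (hwk : ∀ k, w (k + 1) = (1 - Ms * Gmat (w k))⁻¹.mulVec (w 0)) :
    let d0 : ℕ := Nat.card {i : Fin n // 0 ≤ w 0 i}
    (∀ k, {i : Fin n | 0 ≤ w k i} ⊆ {i : Fin n | 0 ≤ w (k + 1) i}) ∧
    (∀ k, n - d0 ≤ k → {i : Fin n | 0 ≤ w k i} = {i : Fin n | 0 ≤ w (n - d0) i}) := by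
  intro d0
  classical
  obtain ⟨hMsnn, hMscol⟩ := hMs
  set gv : (Fin n → ℝ) → Fin n → ℝ := fun v l => if 0 ≤ v l then 1 else 0 with hgv
  -- basic entry facts
  have hgv01 : ∀ v l, gv v l = 0 ∨ gv v l = 1 := by
    intro v l; rw [hgv]; dsimp only; split
    · right; rfl
    · left; rfl
  have hBapp : ∀ v : Fin n → ℝ, ∀ i j, (Ms * Gmat v) i j = Ms i j * gv v j := by
    intro v i j
    rw [Gmat, Matrix.mul_diagonal]
  -- substochastic + Elsinger for Ms * Gmat v
  have hBnn : ∀ v : Fin n → ℝ, ∀ i j, 0 ≤ (Ms * Gmat v) i j := by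
    intro v i j
    rw [hBapp]
    rcases hgv01 v j with h | h <;> rw [h]
    · rw [mul_zero]
    · rw [mul_one]; exact hMsnn i j
  have hBcol : ∀ v : Fin n → ℝ, ∀ j, ∑ i, (Ms * Gmat v) i j ≤ 1 := by
    intro v j
    simp only [hBapp]
    rw [← Finset.sum_mul]
    rcases hgv01 v j with h | h <;> rw [h]
    · rw [mul_zero]; norm_num
    · rw [mul_one]; exact hMscol j
  have hBE : ∀ v : Fin n → ℝ, Elsinger (Ms * Gmat v) := by
    intro v J hJ hsum
    apply hMsE J hJ
    intro j hj
    have h := hsum j hj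
    simp only [hBapp] at h
    rw [← Finset.sum_mul] at h
    rcases hgv01 v j with h0 | h0
    · rw [h0, mul_zero] at h; norm_num at h
    · rw [h0, mul_one] at h; exact h
  have hdet : ∀ v : Fin n → ℝ, IsUnit (1 - Ms * Gmat v).det := fun v =>
    EquityAux.isUnit_one_sub_det (hBnn v) (hBcol v) (hBE v)
  have hinv : ∀ v : Fin n → ℝ, ∀ i j, 0 ≤ (1 - Ms * Gmat v)⁻¹ i j := fun v =>
    EquityAux.inv_one_sub_nonneg (hBnn v) (hBcol v) (hBE v)
  -- mulVec entry formula
  have hBv : ∀ v x : Fin n → ℝ, ∀ i, ((Ms * Gmat v) *ᵥ x) i = ∑ l, Ms i l * (gv v l * x l) := by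
    intro v x i
    rw [← Matrix.mulVec_mulVec]
    have hin : Gmat v *ᵥ x = fun l => gv v l * x l := by
      funext l
      rw [Gmat, Matrix.mulVec_diagonal]
    rw [hin]
    simp only [Matrix.mulVec, dotProduct]
  -- A_k * w (k+1) = w 0
  have hAw : ∀ k i, w 0 i = w (k+1) i - ((Ms * Gmat (w k)) *ᵥ w (k+1)) i := by
    intro k i
    have h : (1 - Ms * Gmat (w k)) *ᵥ w (k+1) = w 0 := by
      rw [hwk k, Matrix.mulVec_mulVec, Matrix.mul_nonsing_inv _ (hdet _), Matrix.one_mulVec]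
    have h2 := congrFun h i
    rw [Matrix.sub_mulVec, Matrix.one_mulVec] at h2
    simpa using h2.symm
  -- step lemma
  have hstep : ∀ k (u : Fin n → ℝ),
      (∀ i, 0 ≤ w 0 i - ((1 - Ms * Gmat (w k)) *ᵥ u) i) → ∀ i, u i ≤ w (k+1) i := by
    intro k u hnn i
    have hcalc : w (k+1) i - u i
        = ((1 - Ms * Gmat (w k))⁻¹ *ᵥ (fun j => w 0 j - ((1 - Ms * Gmat (w k)) *ᵥ u) j)) i := by
      have e1 : (1 - Ms * Gmat (w k))⁻¹ *ᵥ ((1 - Ms * Gmat (w k)) *ᵥ u) = u := by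
        rw [Matrix.mulVec_mulVec, Matrix.nonsing_inv_mul _ (hdet _), Matrix.one_mulVec]
      have e2 : (fun j => w 0 j - ((1 - Ms * Gmat (w k)) *ᵥ u) j)
          = w 0 - (1 - Ms * Gmat (w k)) *ᵥ u := rfl
      rw [e2, Matrix.mulVec_sub, e1, ← hwk k]
      rfl
    have h3 : 0 ≤ w (k+1) i - u i := by
      rw [hcalc]
      simp only [Matrix.mulVec, dotProduct]
      exact Finset.sum_nonneg fun l _ => mul_nonneg (hinv (w k) i l) (hnn l)
    linarith
  -- monotonicity
  have hkey : ∀ k i, w k i ≤ w (k+1) i := by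
    intro k
    induction k with
    | zero =>
      apply hstep 0 (w 0)
      intro i
      have h1 : ((1 - Ms * Gmat (w 0)) *ᵥ w 0) i = w 0 i - ((Ms * Gmat (w 0)) *ᵥ w 0) i := by
        rw [Matrix.sub_mulVec, Matrix.one_mulVec]; rfl
      rw [h1]
      have h2 : 0 ≤ ((Ms * Gmat (w 0)) *ᵥ w 0) i := by
        rw [hBv]
        refine Finset.sum_nonneg fun l _ => mul_nonneg (hMsnn i l) ?_
        rw [hgv]; dsimp only; split
        · rw [one_mul]; assumption
        · rw [zero_mul]
      linarith
    | succ k ih =>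
      apply hstep (k+1) (w (k+1))
      intro i
      have h1 : ((1 - Ms * Gmat (w (k+1))) *ᵥ w (k+1)) i
          = w (k+1) i - ((Ms * Gmat (w (k+1))) *ᵥ w (k+1)) i := by
        rw [Matrix.sub_mulVec, Matrix.one_mulVec]; rfl
      rw [h1, hAw k i]
      have h2 : ((Ms * Gmat (w k)) *ᵥ w (k+1)) i ≤ ((Ms * Gmat (w (k+1))) *ᵥ w (k+1)) i := by
        rw [hBv, hBv]
        refine Finset.sum_le_sum fun l _ => ?_
        refine mul_le_mul_of_nonneg_left ?_ (hMsnn i l)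
        rw [hgv]; dsimp only
        by_cases h0 : 0 ≤ w k l
        · have h0' : 0 ≤ w (k+1) l := le_trans h0 (ih l)
          rw [if_pos h0, if_pos h0']
        · rw [if_neg h0, zero_mul]
          split
          · rw [one_mul]; assumption
          · rw [zero_mul]
      linarith
  -- first conclusion
  have part1 : ∀ k, {i : Fin n | 0 ≤ w k i} ⊆ {i : Fin n | 0 ≤ w (k + 1) i} := by
    intro k i hi
    exact le_trans hi (hkey k i)
  refine ⟨part1, ?_⟩
  -- finset machinery
  set Pf : ℕ → Finset (Fin n) := fun k => univ.filter (fun i => 0 ≤ w k i) with hPf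
  have hPmem : ∀ k i, i ∈ Pf k ↔ 0 ≤ w k i := by
    intro k i; simp [hPf]
  have hPsub : ∀ k, Pf k ⊆ Pf (k+1) := by
    intro k i hi
    rw [hPmem] at hi ⊢
    exact le_trans hi (hkey k i)
  have hd0 : d0 = (Pf 0).card := by
    show Nat.card {i : Fin n // 0 ≤ w 0 i} = _
    rw [Nat.card_eq_fintype_card, Fintype.card_subtype]
  have hd0n : d0 ≤ n := by
    rw [hd0]
    calc (Pf 0).card ≤ (univ : Finset (Fin n)).card := Finset.card_le_univ _
      _ = n := Finset.card_fin n
  -- stabilization once Pf k = Pf (k+1)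
  have hfix : ∀ k, Pf k = Pf (k+1) → ∀ m, k ≤ m → Pf m = Pf k := by
    intro k hPeq
    have hG : Gmat (w (k+1)) = Gmat (w k) := by
      have hfun : (fun i => if 0 ≤ w (k+1) i then (1:ℝ) else 0)
          = (fun i => if 0 ≤ w k i then (1:ℝ) else 0) := by
        funext i
        have hiff : (0 ≤ w k i) ↔ (0 ≤ w (k+1) i) := by
          rw [← hPmem, ← hPmem, hPeq]
        rw [if_congr hiff.symm rfl rfl]
      rw [Gmat, Gmat, hfun]
    have hwfix : ∀ m, k ≤ m → w (m+1) = w (k+1) := by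
      intro m hm
      induction m, hm using Nat.le_induction with
      | base => rfl
      | succ m hm ihm =>
        rw [hwk (m+1), ihm, hG, ← hwk k]
    intro m hm
    rcases Nat.eq_or_lt_of_le hm with h | h
    · rw [← h]
    · obtain ⟨m', rfl⟩ : ∃ m', m = m' + 1 := ⟨m - 1, by omega⟩
      have hw' : w (m' + 1) = w (k+1) := hwfix m' (by omega)
      calc Pf (m' + 1) = Pf (k+1) := by rw [hPf]; simp only [hw']
        _ = Pf k := hPeq.symm
  -- there is a fixed point index ≤ n - d0
  have hexists : ∃ k, k ≤ n - d0 ∧ Pf k = Pf (k+1) := by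
    by_contra h
    push_neg at h
    have hcard : ∀ k, k ≤ n - d0 + 1 → d0 + k ≤ (Pf k).card := by
      intro k
      induction k with
      | zero => intro _; rw [hd0]; omega
      | succ k ihk =>
        intro hk
        have hk' : k ≤ n - d0 := by omega
        have hne := h k hk'
        have hss : Pf k ⊂ Pf (k+1) := lt_of_le_of_ne (hPsub k) hne
        have hlt := Finset.card_lt_card hss
        have := ihk (by omega)
        omega
    have h1 := hcard (n - d0 + 1) le_rfl
    have h2 : (Pf (n - d0 + 1)).card ≤ n := by
      calc (Pf (n - d0 + 1)).card ≤ (univ : Finset (Fin n)).card := Finset.card_le_univ _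
        _ = n := Finset.card_fin n
    omega
  obtain ⟨k0, hk0le, hk0eq⟩ := hexists
  have hstable : ∀ m, k0 ≤ m → Pf m = Pf k0 := hfix k0 hk0eq
  intro k hk
  have e1 : Pf k = Pf k0 := hstable k (le_trans hk0le hk)
  have e2 : Pf (n - d0) = Pf k0 := hstable (n - d0) hk0le
  have e3 : Pf k = Pf (n - d0) := e1.trans e2.symm
  ext i
  simp only [Set.mem_setOf_eq]
  rw [← hPmem, ← hPmem, e3]
end

section
/- Let L* be the diagonal 0-1 matrix of the default set D* = {i : a_i + (M^d r*)_i + (M^s s*)_i < d_i} of the unique fixed point (r*, s*) of Φ. Then x* := L* r* + (I − L*) s* solves the linear system A x = b with A = I − (M^d L* + M^s (I − L*)) and b = a + M^d (I − L*) d − (I − L*) d, and conversely r* = (I − L*) d + L* x*, s* = (I − L*) x*. -/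
open Matrix Finset

/-- With `L*` the 0-1 diagonal matrix of the default set of the
fixed point `(r*, s*)`, the vector `x* = L* r* + (I − L*) s*` solves
`A x = b` with `A = I − (M^d L* + M^s (I − L*))` and
`b = a + M^d (I − L*) d − (I − L*) d`, and conversely
`r* = (I − L*) d + L* x*` and `s* = (I − L*) x*`. -/
theorem pseudo_solution_linear_system {n : ℕ} (a d : Fin n → ℝ)
    (ha : ∀ i, 0 ≤ a i) (hd : ∀ i, 0 ≤ d i)
    (Md Ms : Matrix (Fin n) (Fin n) ℝ)
    (hMdnn : ∀ i j, 0 ≤ Md i j) (hMsnn : ∀ i j, 0 ≤ Ms i j)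
    (hMdnorm : ∀ j, ∑ i, Md i j < 1) (hMsnorm : ∀ j, ∑ i, Ms i j < 1)
    (rstar sstar : Fin n → ℝ)
    (hr : ∀ i, 0 ≤ rstar i) (hsn : ∀ i, 0 ≤ sstar i)
    (hfixr : rstar
      = fun i => min (d i) (a i + Md.mulVec rstar i + Ms.mulVec sstar i))
    (hfixs : sstar
      = fun i => max (a i + Md.mulVec rstar i + Ms.mulVec sstar i - d i) 0) :
    let Lstar : Matrix (Fin n) (Fin n) ℝ := Matrix.diagonal fun i =>
      if a i + Md.mulVec rstar i + Ms.mulVec sstar i < d i then 1 else 0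
    let xstar : Fin n → ℝ := Lstar.mulVec rstar + (1 - Lstar).mulVec sstar
    (1 - (Md * Lstar + Ms * (1 - Lstar))).mulVec xstar
        = a + Md.mulVec ((1 - Lstar).mulVec d) - (1 - Lstar).mulVec d ∧
    rstar = (1 - Lstar).mulVec d + Lstar.mulVec xstar ∧
    sstar = (1 - Lstar).mulVec xstar := by

  intro Lstar xstar
  set φ : Fin n → ℝ := fun i => a i + Md.mulVec rstar i + Ms.mulVec sstar i with hφ
  have hL : ∀ (v : Fin n → ℝ) (i), Lstar.mulVec v i
      = (if φ i < d i then (1:ℝ) else 0) * v i := by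
    intro v i
    simp [Lstar, Matrix.mulVec_diagonal, hφ]
  have hsub : ∀ v : Fin n → ℝ, (1 - Lstar).mulVec v = v - Lstar.mulVec v := by
    intro v; rw [Matrix.sub_mulVec, Matrix.one_mulVec]
  have hr' : ∀ i, rstar i = if φ i < d i then φ i else d i := by
    intro i
    by_cases h : φ i < d i
    · conv_lhs => rw [hfixr]
      rw [if_pos h]
      exact min_eq_right h.le
    · conv_lhs => rw [hfixr]
      rw [if_neg h]
      exact min_eq_left (not_lt.mp h)
  have hs' : ∀ i, sstar i = if φ i < d i then 0 else φ i - d i := by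
    intro i
    by_cases h : φ i < d i
    · conv_lhs => rw [hfixs]
      rw [if_pos h]
      have h' : a i + Md.mulVec rstar i + Ms.mulVec sstar i < d i := h
      exact max_eq_right (by linarith)
    · conv_lhs => rw [hfixs]
      rw [if_neg h]
      have h' : d i ≤ a i + Md.mulVec rstar i + Ms.mulVec sstar i := not_lt.mp h
      exact max_eq_left (by linarith)
  have hx : ∀ i, xstar i = if φ i < d i then rstar i else sstar i := by
    intro i
    show Lstar.mulVec rstar i + (1 - Lstar).mulVec sstar i = _
    rw [hsub sstar]
    simp only [Pi.sub_apply, hL]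
    by_cases h : φ i < d i <;> simp [h, hs' i]
  have h2 : rstar = (1 - Lstar).mulVec d + Lstar.mulVec xstar := by
    funext i
    rw [hsub d]
    simp only [Pi.add_apply, Pi.sub_apply, hL]
    by_cases h : φ i < d i
    · simp [h, hx i]
    · simp [h, hr' i]
  have h3 : sstar = (1 - Lstar).mulVec xstar := by
    funext i
    rw [hsub xstar]
    simp only [Pi.sub_apply, hL]
    by_cases h : φ i < d i
    · simp [h, hs' i, hx i]
    · simp [h, hx i]
  refine ⟨?_, h2, h3⟩
  have hxvec : xstar = (a + Md.mulVec rstar + Ms.mulVec sstar)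
      - (d - Lstar.mulVec d) := by
    funext i
    simp only [Pi.sub_apply, Pi.add_apply, hL]
    by_cases h : φ i < d i
    · rw [hx i, hr' i]; simp [h, hφ, show a i + Md.mulVec rstar i + Ms.mulVec sstar i < d i from h]
    · rw [hx i, hs' i]; simp [h, hφ, show ¬ (a i + Md.mulVec rstar i + Ms.mulVec sstar i < d i) from h]
  have hLx : Lstar.mulVec xstar = rstar - (d - Lstar.mulVec d) := by
    rw [h2, hsub d]; abel
  rw [Matrix.sub_mulVec, Matrix.add_mulVec, Matrix.one_mulVec,
    ← Matrix.mulVec_mulVec xstar Md Lstar, ← Matrix.mulVec_mulVec xstar Ms (1 - Lstar),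
    hLx, ← h3, Matrix.mulVec_sub, hsub d]
  rw [hxvec]
  abel
end

section
/- The map Φ(r,s) = (min{d, a + M^d r + M^s s}, (a + M^d r + M^s s − d)^+) is non-expansive in the ℓ¹-norm: ||Φ(R₁) − Φ(R₂)||₁ ≤ c ||R₁ − R₂||₁ with c = max{||M^d||₁, ||M^s||₁} ≤ 1, where ||·||₁ is the ℓ¹-norm on ℝ^{2n}. In particular, if both operator norms are strictly less than 1, Φ is a strict contraction. -/
open Matrix Finset

private lemma key_le (d x y : ℝ) (h : y ≤ x) :
    |min d x - min d y| + |max (x - d) 0 - max (y - d) 0| ≤ x - y := by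
  have hmx : min d x = x - max (x - d) 0 := by
    rcases le_total x d with h'|h'
    · rw [min_eq_right h', max_eq_right (by linarith)]; ring
    · rw [min_eq_left h', max_eq_left (by linarith)]; ring
  have hmy : min d y = y - max (y - d) 0 := by
    rcases le_total y d with h'|h'
    · rw [min_eq_right h', max_eq_right (by linarith)]; ring
    · rw [min_eq_left h', max_eq_left (by linarith)]; ring
  have hv : 0 ≤ max (y - d) 0 := le_max_right _ _
  have hmono : max (y - d) 0 ≤ max (x - d) 0 :=
    max_le_max (by linarith) le_rfl
  have hlip : max (x - d) 0 ≤ max (y - d) 0 + (x - y) := by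
    apply max_le
    · have := le_max_left (y - d) 0; linarith
    · linarith
  rw [hmx, hmy]
  rw [abs_of_nonneg (by linarith), abs_of_nonneg (by linarith)]
  linarith

private lemma key (d x y : ℝ) :
    |min d x - min d y| + |max (x - d) 0 - max (y - d) 0| ≤ |x - y| := by
  rcases le_total y x with h|h
  · rw [abs_of_nonneg (sub_nonneg.2 h : (0:ℝ) ≤ x - y)]; exact key_le d x y h
  · rw [abs_sub_comm x y, abs_of_nonneg (sub_nonneg.2 h : (0:ℝ) ≤ y - x),
      abs_sub_comm (min d x), abs_sub_comm (max (x - d) 0)]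
    exact key_le d y x h

/-- `Φ` is non-expansive in the ℓ¹-norm with constant
`c = max{‖M^d‖₁, ‖M^s‖₁} ≤ 1` (maximum column sums); if both operator norms are
strictly less than 1, then `c < 1`, i.e. `Φ` is a strict contraction. -/
theorem Phi_nonexpansive_l1 {n : ℕ} (hn : 0 < n) (a d : Fin n → ℝ)
    (ha : ∀ i, 0 ≤ a i) (hd : ∀ i, 0 ≤ d i)
    (Md Ms : Matrix (Fin n) (Fin n) ℝ)
    (hMdnn : ∀ i j, 0 ≤ Md i j) (hMsnn : ∀ i j, 0 ≤ Ms i j)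
    (hMdsub : ∀ j, ∑ i, Md i j ≤ 1) (hMssub : ∀ j, ∑ i, Ms i j ≤ 1) :
    let c : ℝ := max (⨆ j, ∑ i, Md i j) (⨆ j, ∑ i, Ms i j)
    c ≤ 1 ∧
    (∀ r1 s1 r2 s2 : Fin n → ℝ,
      (∑ i, |min (d i) (a i + Md.mulVec r1 i + Ms.mulVec s1 i)
           - min (d i) (a i + Md.mulVec r2 i + Ms.mulVec s2 i)|)
      + (∑ i, |max (a i + Md.mulVec r1 i + Ms.mulVec s1 i - d i) 0
             - max (a i + Md.mulVec r2 i + Ms.mulVec s2 i - d i) 0|)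
      ≤ c * ((∑ i, |r1 i - r2 i|) + ∑ i, |s1 i - s2 i|)) ∧
    ((∀ j, ∑ i, Md i j < 1) → (∀ j, ∑ i, Ms i j < 1) → c < 1) := by
  haveI : Nonempty (Fin n) := ⟨⟨0, hn⟩⟩
  intro c
  have hbdd : ∀ M : Matrix (Fin n) (Fin n) ℝ,
      BddAbove (Set.range fun j => ∑ i, M i j) :=
    fun M => (Set.finite_range _).bddAbove
  have hcd : ∀ j, ∑ i, Md i j ≤ c :=
    fun j => le_trans (le_ciSup (hbdd Md) j) (le_max_left _ _)
  have hcs : ∀ j, ∑ i, Ms i j ≤ c :=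
    fun j => le_trans (le_ciSup (hbdd Ms) j) (le_max_right _ _)
  refine ⟨max_le (ciSup_le hMdsub) (ciSup_le hMssub), ?_, ?_⟩
  · intro r1 s1 r2 s2
    set x1 : Fin n → ℝ := fun i => a i + Md.mulVec r1 i + Ms.mulVec s1 i with hx1
    set x2 : Fin n → ℝ := fun i => a i + Md.mulVec r2 i + Ms.mulVec s2 i with hx2
    have step1 :
        (∑ i, |min (d i) (x1 i) - min (d i) (x2 i)|)
        + (∑ i, |max (x1 i - d i) 0 - max (x2 i - d i) 0|)
        ≤ ∑ i, |x1 i - x2 i| := by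
      rw [← Finset.sum_add_distrib]
      exact Finset.sum_le_sum fun i _ => key (d i) (x1 i) (x2 i)
    have step2 : ∀ i, |x1 i - x2 i|
        ≤ (∑ j, Md i j * |r1 j - r2 j|) + ∑ j, Ms i j * |s1 j - s2 j| := by
      intro i
      have hx : x1 i - x2 i
          = (∑ j, Md i j * (r1 j - r2 j)) + ∑ j, Ms i j * (s1 j - s2 j) := by
        simp only [hx1, hx2, Matrix.mulVec, dotProduct, mul_sub,
          Finset.sum_sub_distrib]
        ring
      rw [hx]
      refine le_trans (abs_add_le _ _) (add_le_add ?_ ?_) <;>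
        refine le_trans (Finset.abs_sum_le_sum_abs _ _) (Finset.sum_le_sum ?_) <;>
        intro j _
      · rw [abs_mul, abs_of_nonneg (hMdnn i j)]
      · rw [abs_mul, abs_of_nonneg (hMsnn i j)]
    have step3 : ∑ i, |x1 i - x2 i|
        ≤ c * ((∑ i, |r1 i - r2 i|) + ∑ i, |s1 i - s2 i|) := by
      calc ∑ i, |x1 i - x2 i|
          ≤ ∑ i, ((∑ j, Md i j * |r1 j - r2 j|) + ∑ j, Ms i j * |s1 j - s2 j|) :=
            Finset.sum_le_sum fun i _ => step2 i
        _ = (∑ j, (∑ i, Md i j) * |r1 j - r2 j|)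
            + ∑ j, (∑ i, Ms i j) * |s1 j - s2 j| := by
            rw [Finset.sum_add_distrib]
            congr 1 <;> rw [Finset.sum_comm] <;>
              exact Finset.sum_congr rfl fun j _ => (Finset.sum_mul _ _ _).symm
        _ ≤ (∑ j, c * |r1 j - r2 j|) + ∑ j, c * |s1 j - s2 j| := by
            exact add_le_add
              (Finset.sum_le_sum fun j _ =>
                mul_le_mul_of_nonneg_right (hcd j) (abs_nonneg _))
              (Finset.sum_le_sum fun j _ =>
                mul_le_mul_of_nonneg_right (hcs j) (abs_nonneg _))
        _ = c * ((∑ i, |r1 i - r2 i|) + ∑ i, |s1 i - s2 i|) := by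
            rw [← Finset.mul_sum, ← Finset.mul_sum, mul_add]
    exact le_trans step1 step3
  · intro h1 h2
    obtain ⟨j1, hj1⟩ := Finite.exists_max fun j => ∑ i, Md i j
    obtain ⟨j2, hj2⟩ := Finite.exists_max fun j => ∑ i, Ms i j
    exact max_lt (lt_of_le_of_lt (ciSup_le hj1) (h1 j1))
      (lt_of_le_of_lt (ciSup_le hj2) (h2 j2))
end

section
/- If a + M^d d + M^s s(d) < d componentwise (all firms default even under full debt payments), then the unique fixed point of Φ is ((I − M^d)^{-1} a, 0): the equity component of the solution is the zero vector and the debt component is (I − M^d)^{-1} a. -/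
open Matrix Finset Filter Topology

/-- Core lemma: if `0 ≤ v ≤ M v` for substochastic Elsinger `M`, then `v = 0`. -/
lemma lemA {n : ℕ} {M : Matrix (Fin n) (Fin n) ℝ} (hM : Substoch M) (hME : Elsinger M)
    {v : Fin n → ℝ} (hv0 : ∀ i, 0 ≤ v i) (hle : ∀ i, v i ≤ M.mulVec v i) :
    ∀ i, v i = 0 := by
  have hmv : ∀ i, M.mulVec v i = ∑ j, M i j * v j := fun i => rfl
  have hswap : ∑ i, M.mulVec v i = ∑ j, (∑ i, M i j) * v j := by
    simp_rw [hmv, Finset.sum_mul]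
    exact Finset.sum_comm
  have h1 : ∑ i, v i ≤ ∑ i, M.mulVec v i :=
    Finset.sum_le_sum fun i _ => hle i
  have h2 : ∑ j, (∑ i, M i j) * v j ≤ ∑ j, v j :=
    Finset.sum_le_sum fun j _ => mul_le_of_le_one_left (hv0 j) (hM.2 j)
  have heq : ∑ i, v i = ∑ i, M.mulVec v i := le_antisymm h1 (by rw [hswap]; exact h2)
  have hptA : ∀ i ∈ Finset.univ, v i = M.mulVec v i :=
    (Finset.sum_eq_sum_iff_of_le (fun i _ => hle i)).mp heq
  have heq2 : ∑ j, (∑ i, M i j) * v j = ∑ j, v j := by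
    rw [← hswap, ← heq]
  have hptB : ∀ j ∈ Finset.univ, (∑ i, M i j) * v j = v j :=
    (Finset.sum_eq_sum_iff_of_le (fun j _ =>
      mul_le_of_le_one_left (hv0 j) (hM.2 j))).mp heq2
  by_contra hne
  push_neg at hne
  obtain ⟨j₀, hj₀⟩ := hne
  set J : Finset (Fin n) := Finset.univ.filter (fun j => v j ≠ 0) with hJ
  have hJne : J.Nonempty := ⟨j₀, by simp [hJ, hj₀]⟩
  refine hME J hJne fun j hj => ?_
  have hvj : v j ≠ 0 := (Finset.mem_filter.mp hj).2
  have hvjpos : 0 < v j := lt_of_le_of_ne (hv0 j) (Ne.symm hvj)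
  have hcol : ∑ i, M i j = 1 := by
    have h := hptB j (Finset.mem_univ j)
    have h' : (∑ i, M i j) * v j = 1 * v j := by rw [one_mul]; exact h
    exact mul_right_cancel₀ hvj h'
  have hzero : ∀ i, i ∉ J → M i j = 0 := by
    intro i hiJ
    have hvi : v i = 0 := by
      by_contra h; exact hiJ (Finset.mem_filter.mpr ⟨Finset.mem_univ i, h⟩)
    have : M.mulVec v i = 0 := by rw [← hptA i (Finset.mem_univ i), hvi]
    have hterms : ∀ k ∈ Finset.univ, (0:ℝ) ≤ M i k * v k :=
      fun k _ => mul_nonneg (hM.1 i k) (hv0 k)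
    have := (Finset.sum_eq_zero_iff_of_nonneg hterms).mp this j (Finset.mem_univ j)
    rcases mul_eq_zero.mp this with h | h
    · exact h
    · exact absurd h hvj
  have hsplit : ∑ i ∈ J, M i j + ∑ i ∈ Jᶜ, M i j = ∑ i, M i j := by
    rw [Finset.sum_add_sum_compl]
  have : ∑ i ∈ Jᶜ, M i j = 0 :=
    Finset.sum_eq_zero fun i hi => hzero i (Finset.mem_compl.mp hi)
  linarith [hsplit, hcol, this]

/-- `det (1 - M) ≠ 0` for substochastic Elsinger `M`. -/
lemma lemC {n : ℕ} {M : Matrix (Fin n) (Fin n) ℝ} (hM : Substoch M) (hME : Elsinger M) :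
    (1 - M).det ≠ 0 := by
  intro hdet
  obtain ⟨v, hv, hv0⟩ := (Matrix.exists_mulVec_eq_zero_iff.mpr hdet)
  have hvM : ∀ i, v i = M.mulVec v i := by
    intro i
    have := congrFun hv0 i
    rw [Matrix.sub_mulVec, Matrix.one_mulVec] at this
    have : v i - M.mulVec v i = 0 := this
    linarith
  have habs : ∀ i, |v i| ≤ M.mulVec (fun k => |v k|) i := by
    intro i
    rw [hvM i]
    calc |M.mulVec v i| = |∑ j, M i j * v j| := rfl
      _ ≤ ∑ j, |M i j * v j| := Finset.abs_sum_le_sum_abs _ _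
      _ = ∑ j, M i j * |v j| := by
          refine Finset.sum_congr rfl fun j _ => ?_
          rw [abs_mul, abs_of_nonneg (hM.1 i j)]
      _ = M.mulVec (fun k => |v k|) i := rfl
  have := lemA hM hME (fun i => abs_nonneg (v i)) habs
  exact hv (funext fun i => abs_eq_zero.mp (this i))

/-- Comparison: if `(1-M) y = b` with `b > 0` and `M` substochastic, then `y ≥ 0`. -/
lemma lemD {n : ℕ} {M : Matrix (Fin n) (Fin n) ℝ} (hM : Substoch M)
    {y b : Fin n → ℝ} (hb : ∀ i, 0 < b i) (hyb : ∀ i, y i = b i + M.mulVec y i) :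
    ∀ i, 0 ≤ y i := by
  by_contra hne
  push_neg at hne
  obtain ⟨i₀, hi₀⟩ := hne
  set J : Finset (Fin n) := Finset.univ.filter (fun i => y i < 0) with hJ
  have hJne : J.Nonempty := ⟨i₀, by simp [hJ, hi₀]⟩
  have hsumJ : ∑ i ∈ J, y i = ∑ i ∈ J, b i + ∑ i ∈ J, M.mulVec y i := by
    rw [← Finset.sum_add_distrib]
    exact Finset.sum_congr rfl fun i _ => hyb i
  have hswap : ∑ i ∈ J, M.mulVec y i = ∑ j, (∑ i ∈ J, M i j) * y j := by
    simp_rw [Matrix.mulVec, dotProduct, Finset.sum_mul]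
    exact Finset.sum_comm
  have hcolJ : ∀ j, ∑ i ∈ J, M i j ≤ 1 := fun j =>
    le_trans (Finset.sum_le_sum_of_subset_of_nonneg (Finset.subset_univ J)
      (fun i _ _ => hM.1 i j)) (hM.2 j)
  have hcolJ0 : ∀ j, 0 ≤ ∑ i ∈ J, M i j := fun j =>
    Finset.sum_nonneg fun i _ => hM.1 i j
  have hlow : ∑ j ∈ J, y j ≤ ∑ j, (∑ i ∈ J, M i j) * y j := by
    rw [← Finset.sum_add_sum_compl J (fun j => (∑ i ∈ J, M i j) * y j)]
    have h1 : ∑ j ∈ J, y j ≤ ∑ j ∈ J, (∑ i ∈ J, M i j) * y j := by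
      refine Finset.sum_le_sum fun j hj => ?_
      have hyj : y j < 0 := (Finset.mem_filter.mp hj).2
      nlinarith [hcolJ j, hcolJ0 j]
    have h2 : (0:ℝ) ≤ ∑ j ∈ Jᶜ, (∑ i ∈ J, M i j) * y j := by
      refine Finset.sum_nonneg fun j hj => ?_
      have : ¬ y j < 0 := by
        have := Finset.mem_compl.mp hj
        simpa [hJ] using this
      exact mul_nonneg (hcolJ0 j) (le_of_not_gt this)
    linarith
  have hbpos : 0 < ∑ i ∈ J, b i := Finset.sum_pos (fun i _ => hb i) hJne
  linarith [hsumJ, hswap ▸ hlow]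

/-- If all firms default even under full debt payments, i.e.
`a + M^d d + M^s s(d) < d` componentwise, then the unique fixed point of `Φ` is
`((I − M^d)⁻¹ a, 0)`. -/
theorem all_default_fixed_point {n : ℕ} (a d : Fin n → ℝ)
    (ha : ∀ i, 0 ≤ a i) (hd : ∀ i, 0 ≤ d i)
    (Md Ms : Matrix (Fin n) (Fin n) ℝ)
    (hMd : Substoch Md) (hMs : Substoch Ms)
    (hMdE : Elsinger Md) (hMsE : Elsinger Ms)
    (sd : Fin n → ℝ) (hsd0 : ∀ i, 0 ≤ sd i)
    (hsdfix : sd = fun i => max (a i + Md.mulVec d i + Ms.mulVec sd i - d i) 0)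
    (halldef : ∀ i, a i + Md.mulVec d i + Ms.mulVec sd i < d i) :
    Phi a d Md Ms ((1 - Md)⁻¹.mulVec a, 0) = ((1 - Md)⁻¹.mulVec a, 0) ∧
    (∀ R : (Fin n → ℝ) × (Fin n → ℝ), 0 ≤ R → Phi a d Md Ms R = R →
      R = ((1 - Md)⁻¹.mulVec a, 0)) := by
  have hdet : (1 - Md).det ≠ 0 := lemC hMd hMdE
  have hunit : IsUnit (1 - Md).det := isUnit_iff_ne_zero.mpr hdet
  set x : Fin n → ℝ := (1 - Md)⁻¹.mulVec a with hxdef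
  have hAx : (1 - Md).mulVec x = a := by
    rw [hxdef, Matrix.mulVec_mulVec, Matrix.mul_nonsing_inv _ hunit, Matrix.one_mulVec]
  have hxa : ∀ i, x i = a i + Md.mulVec x i := by
    intro i
    have := congrFun hAx i
    rw [Matrix.sub_mulVec, Matrix.one_mulVec] at this
    have : x i - Md.mulVec x i = a i := this
    linarith
  -- key strict inequality: a + Md d < d
  have hMssd : ∀ i, 0 ≤ Ms.mulVec sd i := fun i =>
    show (0:ℝ) ≤ ∑ j, Ms i j * sd j from
      Finset.sum_nonneg fun j _ => mul_nonneg (hMs.1 i j) (hsd0 j)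
  have hkey : ∀ i, a i + Md.mulVec d i < d i := fun i => by
    have := halldef i; have := hMssd i; linarith
  -- x ≤ d via lemD
  have hxd : ∀ i, x i ≤ d i := by
    have hyb : ∀ i, d i - x i = (d i - Md.mulVec d i - a i) + Md.mulVec (fun j => d j - x j) i := by
      intro i
      have hsub : Md.mulVec (fun j => d j - x j) i = Md.mulVec d i - Md.mulVec x i := by
        have : (fun j => d j - x j) = d - x := rfl
        rw [this, Matrix.mulVec_sub, Pi.sub_apply]
      rw [hsub]
      have := hxa i
      linarith
    have := lemD hMd (b := fun i => d i - Md.mulVec d i - a i)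
      (fun i => show (0:ℝ) < d i - Md.mulVec d i - a i by have := hkey i; linarith) hyb
    intro i; have := this i; linarith
  -- monotonicity of Md applied to r ≤ d
  have hmono : ∀ (r : Fin n → ℝ), (∀ j, r j ≤ d j) → ∀ i, Md.mulVec r i ≤ Md.mulVec d i := by
    intro r hr i
    show ∑ j, Md i j * r j ≤ ∑ j, Md i j * d j
    exact Finset.sum_le_sum fun j _ => mul_le_mul_of_nonneg_left (hr j) (hMd.1 i j)
  have hxlt : ∀ i, a i + Md.mulVec x i < d i := fun i =>
    lt_of_le_of_lt (by have := hmono x hxd i; linarith) (hkey i)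
  constructor
  · -- fixed point
    unfold Phi
    refine Prod.ext ?_ ?_ <;> simp only
    · funext i
      rw [Matrix.mulVec_zero]
      simp only [Pi.zero_apply, add_zero]
      rw [min_eq_right (le_of_lt (hxlt i))]
      exact (hxa i).symm
    · funext i
      rw [Matrix.mulVec_zero]
      simp only [Pi.zero_apply, add_zero]
      exact max_eq_right (by have := hxlt i; linarith)
  · rintro ⟨r, s⟩ hR0 hfix
    have hr0 : ∀ i, 0 ≤ r i := fun i => hR0.1 i
    have hs0 : ∀ i, 0 ≤ s i := fun i => hR0.2 i
    have hr : ∀ i, min (d i) (a i + Md.mulVec r i + Ms.mulVec s i) = r i := by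
      intro i; exact congrFun (congrArg Prod.fst hfix) i
    have hs : ∀ i, max (a i + Md.mulVec r i + Ms.mulVec s i - d i) 0 = s i := by
      intro i; exact congrFun (congrArg Prod.snd hfix) i
    have hrd : ∀ i, r i ≤ d i := fun i => by
      rw [← hr i]; exact min_le_left _ _
    have hMss0 : ∀ i, 0 ≤ Ms.mulVec s i := fun i =>
      show (0:ℝ) ≤ ∑ j, Ms i j * s j from
        Finset.sum_nonneg fun j _ => mul_nonneg (hMs.1 i j) (hs0 j)
    have hsle : ∀ i, s i ≤ Ms.mulVec s i := by
      intro i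
      rw [← hs i]
      refine max_le ?_ (hMss0 i)
      have h1 := hmono r hrd i
      have h2 := hkey i
      linarith
    have hszero : ∀ i, s i = 0 := lemA hMs hMsE hs0 hsle
    have hsfun : s = 0 := funext hszero
    have hra : ∀ i, r i = a i + Md.mulVec r i := by
      intro i
      have := hr i
      rw [hsfun, Matrix.mulVec_zero] at this
      simp only [Pi.zero_apply, add_zero] at this
      rw [← this]
      refine min_eq_right (le_of_lt ?_)
      exact lt_of_le_of_lt (by have := hmono r hrd i; linarith) (hkey i)
    have hAr : (1 - Md).mulVec r = a := by
      funext i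
      rw [Matrix.sub_mulVec, Matrix.one_mulVec]
      have := hra i
      show r i - Md.mulVec r i = a i
      linarith
    have hrx : r = x := by
      have : (1 - Md)⁻¹.mulVec ((1 - Md).mulVec r) = r := by
        rw [Matrix.mulVec_mulVec, Matrix.nonsing_inv_mul _ hunit, Matrix.one_mulVec]
      rw [← this, hAr]
    rw [hrx, hsfun]
end
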